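/- arXiv:1202.1906 — 10 statements merged into one kernel-verified Lean document; each statement's English description precedes it below -/
import Mathlib

section
/- The quantum signed continuant polynomials satisfy the quantum frieze relation: for all integers m ≥ 1 and i ≥ 1 with i + m ≤ n, one has P_{m,i} P_{m,i+1} = ν P_{m+1,i} P_{m-1,i+1} + 1. -/
/-- **Quantum frieze relation for quantum signed continuant polynomials.**
Let `R` be an associative unital ring, `ν ∈ R` a central invertible element, `q = ν²`,
and `x 1, …, x n ∈ R` satisfying the relations (R1) and (R2). Let `P m i` be the quantum
signed continuant polynomials, defined recursively by `P 0 i = 1`, `P 1 i = x i` and the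
three-term relations. Then `P m i * P m (i+1) = ν * (P (m+1) i * P (m-1) (i+1)) + 1`
whenever `m ≥ 1`, `i ≥ 1` and `i + m ≤ n`. -/
theorem quantum_frieze_relation_for_signed_continuants
    (R : Type*) [Ring R] (n : ℕ) (hn : 1 ≤ n)
    (ν : Rˣ) (hcen : ∀ r : R, (ν : R) * r = r * (ν : R))
    (x : ℕ → R)
    (hR1 : ∀ i, 1 ≤ i → i < n →
      x i * x (i + 1) - 1 = ((ν : R) ^ 2) * (x (i + 1) * x i - 1))
    (hR2 : ∀ i k, 1 ≤ i → 1 < k → i + k ≤ n →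
      x i * x (i + k) = (((ν ^ 2 : Rˣ) ^ ((-1 : ℤ) ^ (k - 1)) : Rˣ) : R) * (x (i + k) * x i))
    (P : ℕ → ℕ → R)
    (hP0 : ∀ i, P 0 i = 1)
    (hP1 : ∀ i, P 1 i = x i)
    (hPeven : ∀ m i, 1 ≤ m → Even m → 1 ≤ i → i + m ≤ n →
      P (m + 1) i = P m i * x (i + m) - ((ν⁻¹ : Rˣ) : R) * P (m - 1) i)
    (hPodd : ∀ m i, 1 ≤ m → Odd m → 1 ≤ i → i + m ≤ n →
      P (m + 1) i = ((ν⁻¹ : Rˣ) : R) * (P m i * x (i + m) - P (m - 1) i)) :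
    ∀ m i, 1 ≤ m → 1 ≤ i → i + m ≤ n →
      P m i * P m (i + 1) = (ν : R) * (P (m + 1) i * P (m - 1) (i + 1)) + 1 := by
  -- abbreviations
  set v : R := ((ν : Rˣ) : R) with hv
  set b : R := ((ν⁻¹ : Rˣ) : R) with hb
  -- centrality of b
  have hbcen : ∀ r : R, b * r = r * b := by
    intro r
    have h : Commute ((ν : Rˣ) : R) r := hcen r
    exact (Commute.units_inv_left h).eq
  -- cancellation facts
  have cvb : ∀ s : R, v * (b * s) = s := by
    intro s; rw [← mul_assoc, hv, hb, Units.mul_inv, one_mul]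
  have cbv : ∀ s : R, b * (v * s) = s := by
    intro s; rw [← mul_assoc, hv, hb, Units.inv_mul, one_mul]
  have cvb1 : v * b = 1 := by rw [hv, hb, Units.mul_inv]
  have cbv1 : b * v = 1 := by rw [hv, hb, Units.inv_mul]
  -- push lemmas
  have pxv : ∀ (j : ℕ) (s : R), x j * (v * s) = v * (x j * s) := by
    intro j s; rw [← mul_assoc, ← hcen, mul_assoc]
  have pxv1 : ∀ j : ℕ, x j * v = v * x j := fun j => (hcen (x j)).symm
  have pxb : ∀ (j : ℕ) (s : R), x j * (b * s) = b * (x j * s) := by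
    intro j s; rw [← mul_assoc, ← hbcen, mul_assoc]
  have pxb1 : ∀ j : ℕ, x j * b = b * x j := fun j => (hbcen (x j)).symm
  have pPv : ∀ (a c : ℕ) (s : R), P a c * (v * s) = v * (P a c * s) := by
    intro a c s; rw [← mul_assoc, ← hcen, mul_assoc]
  have pPv1 : ∀ a c : ℕ, P a c * v = v * P a c := fun a c => (hcen (P a c)).symm
  have pPb : ∀ (a c : ℕ) (s : R), P a c * (b * s) = b * (P a c * s) := by
    intro a c s; rw [← mul_assoc, ← hbcen, mul_assoc]
  have pPb1 : ∀ a c : ℕ, P a c * b = b * P a c := fun a c => (hbcen (P a c)).symm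
  -- reassociation helper
  have ext : ∀ {A B C : R}, A * B = C → ∀ s : R, A * (B * s) = C * s := by
    intro A B C h s; rw [← mul_assoc, h]
  -- rewritten relation R1
  have hR1' : ∀ i, 1 ≤ i → i < n →
      x i * x (i + 1) = v * (v * (x (i + 1) * x i)) + (1 - v * v) := by
    intro i h1 h2
    have h := hR1 i h1 h2
    have h' : x i * x (i + 1) = ((ν : R) ^ 2) * (x (i + 1) * x i - 1) + 1 := by
      rw [← h]; abel
    rw [h', pow_two, mul_sub, mul_assoc, mul_one, ← hv]
    abel
  -- rewritten relation R2, even distance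
  have hR2e : ∀ i k, 1 ≤ i → 1 < k → i + k ≤ n → k % 2 = 0 →
      x i * x (i + k) = b * (b * (x (i + k) * x i)) := by
    intro i k h1 hk hkn he
    have hkod : Odd (k - 1) := Nat.Even.sub_odd (by omega) (Nat.even_iff.mpr he) odd_one
    rw [hR2 i k h1 hk hkn, Odd.neg_one_pow hkod, zpow_neg_one, ← inv_pow]
    push_cast [pow_two]
    rw [mul_assoc, ← hb]
  -- rewritten relation R2, odd distance
  have hR2o : ∀ i k, 1 ≤ i → 1 < k → i + k ≤ n → k % 2 = 1 →
      x i * x (i + k) = v * (v * (x (i + k) * x i)) := by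
    intro i k h1 hk hkn ho
    have hkev : Even (k - 1) := Nat.Odd.sub_odd (Nat.odd_iff.mpr ho) odd_one
    rw [hR2 i k h1 hk hkn, Even.neg_one_pow hkev, zpow_one]
    push_cast [pow_two]
    rw [mul_assoc, ← hv]
  -- Lemma B : quasi-commutation of P m j with a far generator x t
  have lemB : ∀ m j t, 1 ≤ j → j + m + 1 ≤ t → t ≤ n →
      ((m % 2 = 0 → P m j * x t = x t * P m j) ∧
       (m % 2 = 1 → (t - j) % 2 = 0 → P m j * x t = b * (b * (x t * P m j))) ∧
       (m % 2 = 1 → (t - j) % 2 = 1 → P m j * x t = v * (v * (x t * P m j)))) := by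
    intro m
    induction m using Nat.twoStepInduction with
    | zero =>
      intro j t hj ht htn
      refine ⟨fun _ => by rw [hP0, one_mul, mul_one], fun h => by omega, fun h => by omega⟩
    | one =>
      intro j t hj ht htn
      have hk : t = j + (t - j) := by omega
      refine ⟨fun h => by omega, fun _ hp => ?_, fun _ hp => ?_⟩
      · rw [hP1, hk]
        exact hR2e j (t - j) hj (by omega) (by omega) (by omega)
      · rw [hP1, hk]
        exact hR2o j (t - j) hj (by omega) (by omega) (by omega)
    | more m IH IH1 =>
      intro j t hj ht htn
      have hjn : j + (m + 1) ≤ n := by omega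
      have hxk : t = (j + (m + 1)) + (t - j - m - 1) := by omega
      obtain ⟨B0, B0o0, B0o1⟩ := IH j t hj (by omega) htn
      obtain ⟨B1e, B1o0, B1o1⟩ := IH1 j t hj (by omega) htn
      by_cases hem : m % 2 = 0
      · -- m even : use hPodd at m+1
        have recP : P (m + 2) j = b * (P (m + 1) j * x (j + (m + 1)) - P m j) := by
          have := hPodd (m + 1) j (by omega) (Nat.odd_iff.mpr (by omega)) hj hjn
          simpa using this
        have hPmt : P m j * x t = x t * P m j := B0 hem
        refine ⟨fun _ => ?_, fun h => by omega, fun h => by omega⟩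
        by_cases hte : (t - j) % 2 = 0
        · -- t - j even, so distance t-j-m-1 is odd
          have hx : x (j + (m + 1)) * x t = v * (v * (x t * x (j + (m + 1)))) := by
            rw [hxk]; exact hR2o _ _ (by omega) (by omega) (by omega) (by omega)
          have hP1t : P (m + 1) j * x t = b * (b * (x t * P (m + 1) j)) :=
            B1o0 (by omega) hte
          rw [recP]
          simp only [mul_sub, sub_mul, mul_add, add_mul, mul_assoc, mul_one, one_mul,
            ext hx, hx, ext hPmt, hPmt, ext hP1t, hP1t,
            pxv, pxv1, pxb, pxb1, pPv, pPv1, pPb, pPb1, cvb, cbv, cvb1, cbv1]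
        · have hx : x (j + (m + 1)) * x t = b * (b * (x t * x (j + (m + 1)))) := by
            rw [hxk]; exact hR2e _ _ (by omega) (by omega) (by omega) (by omega)
          have hP1t : P (m + 1) j * x t = v * (v * (x t * P (m + 1) j)) :=
            B1o1 (by omega) (by omega)
          rw [recP]
          simp only [mul_sub, sub_mul, mul_add, add_mul, mul_assoc, mul_one, one_mul,
            ext hx, hx, ext hPmt, hPmt, ext hP1t, hP1t,
            pxv, pxv1, pxb, pxb1, pPv, pPv1, pPb, pPb1, cvb, cbv, cvb1, cbv1]
      · -- m odd : use hPeven at m+1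
        have recP : P (m + 2) j = P (m + 1) j * x (j + (m + 1)) - b * P m j := by
          have := hPeven (m + 1) j (by omega) (Nat.even_iff.mpr (by omega)) hj hjn
          simpa using this
        have hP1t : P (m + 1) j * x t = x t * P (m + 1) j := B1e (by omega)
        refine ⟨fun h => by omega, fun _ hte => ?_, fun _ hto => ?_⟩
        · -- t - j even; m odd so distance t-j-m-1 even
          have hx : x (j + (m + 1)) * x t = b * (b * (x t * x (j + (m + 1)))) := by
            rw [hxk]; exact hR2e _ _ (by omega) (by omega) (by omega) (by omega)
          have hPmt : P m j * x t = b * (b * (x t * P m j)) := B0o0 (by omega) hte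
          rw [recP]
          simp only [mul_sub, sub_mul, mul_add, add_mul, mul_assoc, mul_one, one_mul,
            ext hx, hx, ext hPmt, hPmt, ext hP1t, hP1t,
            pxv, pxv1, pxb, pxb1, pPv, pPv1, pPb, pPb1, cvb, cbv, cvb1, cbv1]
        · have hx : x (j + (m + 1)) * x t = v * (v * (x t * x (j + (m + 1)))) := by
            rw [hxk]; exact hR2o _ _ (by omega) (by omega) (by omega) (by omega)
          have hPmt : P m j * x t = v * (v * (x t * P m j)) := B0o1 (by omega) hto
          rw [recP]
          simp only [mul_sub, sub_mul, mul_add, add_mul, mul_assoc, mul_one, one_mul,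
            ext hx, hx, ext hPmt, hPmt, ext hP1t, hP1t,
            pxv, pxv1, pxb, pxb1, pPv, pPv1, pPb, pPb1, cvb, cbv, cvb1, cbv1]
  -- Lemma A : quasi-commutation of P m j with the next generator x (j+m)
  have lemA : ∀ m j, 1 ≤ m → 1 ≤ j → j + m ≤ n →
      ((m % 2 = 1 → P m j * x (j + m) =
          v * (v * (x (j + m) * P m j)) + (P (m - 1) j - v * (v * P (m - 1) j))) ∧
       (m % 2 = 0 → P m j * x (j + m) =
          x (j + m) * P m j + (b * P (m - 1) j - v * P (m - 1) j))) := by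
    intro m j hm hj hjn
    match m, hm with
    | 1, _ =>
      refine ⟨fun _ => ?_, fun h => by omega⟩
      rw [hP1, hR1' j hj (by omega)]
      simp only [Nat.sub_self, hP0, mul_one]
    | (k + 2), _ =>
      have hadj : x (j + (k + 1)) * x (j + (k + 1) + 1) =
          v * (v * (x (j + (k + 1) + 1) * x (j + (k + 1)))) + (1 - v * v) := by
        exact hR1' (j + (k + 1)) (by omega) (by omega)
      have e : j + (k + 1) + 1 = j + (k + 2) := by omega
      rw [e] at hadj
      obtain ⟨A1, A2, A3⟩ := lemB (k + 1) j (j + (k + 2)) hj (by omega) (by omega)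
      obtain ⟨C1, C2, C3⟩ := lemB k j (j + (k + 2)) hj (by omega) (by omega)
      by_cases hek : k % 2 = 0
      · -- k even, m = k+2 even
        have recP : P (k + 2) j = b * (P (k + 1) j * x (j + (k + 1)) - P k j) := by
          have := hPodd (k + 1) j (by omega) (Nat.odd_iff.mpr (by omega)) hj (by omega)
          simpa using this
        have hB1 : P (k + 1) j * x (j + (k + 2)) =
            b * (b * (x (j + (k + 2)) * P (k + 1) j)) := A2 (by omega) (by omega)
        have hB0 : P k j * x (j + (k + 2)) = x (j + (k + 2)) * P k j := C1 hek
        refine ⟨fun h => by omega, fun _ => ?_⟩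
        have e1 : k + 2 - 1 = k + 1 := by omega
        rw [recP, e1]
        simp only [mul_sub, sub_mul, mul_add, add_mul, mul_assoc, mul_one, one_mul,
          ext hadj, hadj, ext hB1, hB1, ext hB0, hB0,
          pxv, pxv1, pxb, pxb1, pPv, pPv1, pPb, pPb1, cvb, cbv, cvb1, cbv1]
        abel
      · -- k odd, m = k+2 odd
        have recP : P (k + 2) j = P (k + 1) j * x (j + (k + 1)) - b * P k j := by
          have := hPeven (k + 1) j (by omega) (Nat.even_iff.mpr (by omega)) hj (by omega)
          simpa using this
        have hB1 : P (k + 1) j * x (j + (k + 2)) = x (j + (k + 2)) * P (k + 1) j :=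
          A1 (by omega)
        have hB0 : P k j * x (j + (k + 2)) =
            v * (v * (x (j + (k + 2)) * P k j)) := C3 (by omega) (by omega)
        refine ⟨fun _ => ?_, fun h => by omega⟩
        have e1 : k + 2 - 1 = k + 1 := by omega
        rw [recP, e1]
        simp only [mul_sub, sub_mul, mul_add, add_mul, mul_assoc, mul_one, one_mul,
          ext hadj, hadj, ext hB1, hB1, ext hB0, hB0,
          pxv, pxv1, pxb, pxb1, pPv, pPv1, pPb, pPb1, cvb, cbv, cvb1, cbv1]
        abel
  -- main induction
  suffices H : ∀ m, 1 ≤ m → ∀ i, 1 ≤ i → i + m ≤ n →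
      P m i * P m (i + 1) = v * (P (m + 1) i * P (m - 1) (i + 1)) + 1 by
    exact fun m i hm hi h => H m hm i hi h
  intro m hm
  induction m, hm using Nat.le_induction with
  | base =>
    intro i hi hin
    have recP : P (1 + 1) i = b * (x i * x (i + 1) - 1) := by
      have := hPodd 1 i le_rfl odd_one hi (by omega)
      simpa [hP0, hP1] using this
    rw [recP]
    simp only [Nat.sub_self, hP0, hP1, mul_sub, sub_mul, mul_add, add_mul, mul_assoc,
      mul_one, one_mul, pxv, pxv1, pxb, pxb1, pPv, pPv1, pPb, pPb1, cvb, cbv, cvb1, cbv1]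
    abel
  | succ m hm IH =>
    intro i hi hin
    have hIH := IH i hi (by omega)
    have hIH' : v * (P (m + 1) i * P (m - 1) (i + 1)) = P m i * P m (i + 1) - 1 := by
      rw [hIH]; abel
    obtain ⟨Aodd, Aeven⟩ := lemA m (i + 1) hm (by omega) (by omega)
    have e1 : i + 1 + m = i + (m + 1) := by omega
    rw [e1] at Aodd Aeven
    have e2 : m + 1 - 1 = m := by omega
    rw [e2]
    by_cases hem : m % 2 = 0
    · -- m even : P (m+2) i via hPodd (m+1), P (m+1) (i+1) via hPeven m
      have rec2 : P (m + 1 + 1) i = b * (P (m + 1) i * x (i + (m + 1)) - P m i) := by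
        have := hPodd (m + 1) i (by omega) (Nat.odd_iff.mpr (by omega)) hi (by omega)
        simpa using this
      have rec1 : P (m + 1) (i + 1) = P m (i + 1) * x (i + (m + 1)) - b * P (m - 1) (i + 1) := by
        have := hPeven m (i + 1) hm (Nat.even_iff.mpr hem) (by omega) (by omega)
        rw [e1] at this; exact this
      have hA := Aeven hem
      rw [rec2, rec1]
      simp only [mul_sub, sub_mul, mul_add, add_mul, mul_assoc, mul_one, one_mul,
        ext hA, hA, hIH',
        pxv, pxv1, pxb, pxb1, pPv, pPv1, pPb, pPb1, cvb, cbv, cvb1, cbv1]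
      abel
    · -- m odd : P (m+2) i via hPeven (m+1), P (m+1) (i+1) via hPodd m
      have rec2 : P (m + 1 + 1) i = P (m + 1) i * x (i + (m + 1)) - b * P m i := by
        have := hPeven (m + 1) i (by omega) (Nat.even_iff.mpr (by omega)) hi (by omega)
        simpa using this
      have rec1 : P (m + 1) (i + 1) = b * (P m (i + 1) * x (i + (m + 1)) - P (m - 1) (i + 1)) := by
        have := hPodd m (i + 1) hm (Nat.odd_iff.mpr (by omega)) (by omega) (by omega)
        rw [e1] at this; exact this
      have hA := Aodd (by omega)
      rw [rec2, rec1]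
      simp only [mul_sub, sub_mul, mul_add, add_mul, mul_assoc, mul_one, one_mul,
        ext hA, hA, hIH',
        pxv, pxv1, pxb, pxb1, pPv, pPv1, pPb, pPb1, cvb, cbv, cvb1, cbv1]
      abel
end

section
/- Reversed recursion for quantum signed continuant polynomials, even case: for every even integer m ≥ 1 and every 1 ≤ i ≤ n − m, one has P_{m+1,i} = x_{i+m} P_{m,i} − ν P_{m−1,i}. -/
theorem reversed_recursion_even_case
    (R : Type*) [Ring R] (n : ℕ) (hn : 1 ≤ n)
    (ν : Rˣ) (hcen : ∀ r : R, (ν : R) * r = r * (ν : R))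
    (x : ℕ → R)
    (hR1 : ∀ i, 1 ≤ i → i < n →
      x i * x (i + 1) - 1 = ((ν : R) ^ 2) * (x (i + 1) * x i - 1))
    (hR2 : ∀ i k, 1 ≤ i → 1 < k → i + k ≤ n →
      x i * x (i + k) = (((ν ^ 2 : Rˣ) ^ ((-1 : ℤ) ^ (k - 1)) : Rˣ) : R) * (x (i + k) * x i))
    (P : ℕ → ℕ → R)
    (hP0 : ∀ i, P 0 i = 1)
    (hP1 : ∀ i, P 1 i = x i)
    (hPeven : ∀ m i, 1 ≤ m → Even m → 1 ≤ i → i + m ≤ n →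
      P (m + 1) i = P m i * x (i + m) - ((ν⁻¹ : Rˣ) : R) * P (m - 1) i)
    (hPodd : ∀ m i, 1 ≤ m → Odd m → 1 ≤ i → i + m ≤ n →
      P (m + 1) i = ((ν⁻¹ : Rˣ) : R) * (P m i * x (i + m) - P (m - 1) i)) :
    ∀ m i, 1 ≤ m → Even m → 1 ≤ i → i + m ≤ n →
      P (m + 1) i = x (i + m) * P m i - (ν : R) * P (m - 1) i := by
  set w : R := ((ν⁻¹ : Rˣ) : R) with hwdef
  have hvw : (ν : R) * w = 1 := by rw [hwdef]; exact Units.mul_inv ν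
  have hwv : w * (ν : R) = 1 := by rw [hwdef]; exact Units.inv_mul ν
  have hcw : ∀ r : R, w * r = r * w := by
    intro r
    calc w * r = (w * r) * ((ν : R) * w) := by rw [hvw, mul_one]
      _ = (w * (r * (ν : R))) * w := by noncomm_ring
      _ = (w * ((ν : R) * r)) * w := by rw [← hcen r]
      _ = ((w * (ν : R)) * r) * w := by noncomm_ring
      _ = r * w := by rw [hwv, one_mul]
  set q : R := (ν : R) * (ν : R) with hqdef
  set qi : R := w * w with hqidef
  have hqqi : q * qi = 1 := by
    rw [hqdef, hqidef]
    calc (ν : R) * (ν : R) * (w * w) = (ν : R) * (((ν : R) * w) * w) := by noncomm_ring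
      _ = 1 := by rw [hvw, one_mul, hvw]
  have hqiq : qi * q = 1 := by
    rw [hqdef, hqidef]
    calc w * w * ((ν : R) * (ν : R)) = w * ((w * (ν : R)) * (ν : R)) := by noncomm_ring
      _ = 1 := by rw [hwv, one_mul, hwv]
  have hq : ∀ r : R, q * r = r * q := by
    intro r
    rw [hqdef, mul_assoc, hcen r, ← mul_assoc, hcen r, mul_assoc]
  have hqi : ∀ r : R, qi * r = r * qi := by
    intro r
    rw [hqidef, mul_assoc, hcw r, ← mul_assoc, hcw r, mul_assoc]
  have hwq : w * q = (ν : R) := by rw [hqdef, ← mul_assoc, hwv, one_mul]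
  -- rewritten relations
  have hR1' : ∀ j, 1 ≤ j → j < n →
      x (j + 1) * x j = qi * (x j * x (j + 1)) + (1 - qi) := by
    intro j h1 h2
    have h := hR1 j h1 h2
    have hq2 : ((ν : R)) ^ 2 = q := by rw [hqdef, pow_two]
    rw [hq2] at h
    have h2' : qi * (x j * x (j + 1) - 1) = x (j + 1) * x j - 1 := by
      rw [h, ← mul_assoc, hqiq, one_mul]
    have h3 : x (j + 1) * x j = qi * (x j * x (j + 1) - 1) + 1 := by
      rw [h2']; noncomm_ring
    rw [h3]; noncomm_ring
  have hR2' : ∀ j k, 1 ≤ j → 2 ≤ k → j + k ≤ n →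
      x j * x (j + k) = (if Even k then qi else q) * (x (j + k) * x j) := by
    intro j k hj hk hjk
    have h := hR2 j k hj (by omega) hjk
    rcases Nat.even_or_odd k with he | ho
    · have hodd : Odd (k - 1) := Nat.Even.sub_odd (by omega) he odd_one
      rw [Odd.neg_one_pow hodd, zpow_neg_one] at h
      rw [if_pos he]
      have hco : (((ν ^ 2 : Rˣ)⁻¹ : Rˣ) : R) = qi := by
        rw [← inv_pow, Units.val_pow_eq_pow_val, pow_two, hqidef, hwdef]
      rwa [hco] at h
    · have hev : Even (k - 1) := Nat.Odd.sub_odd ho odd_one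
      rw [Even.neg_one_pow hev, zpow_one] at h
      rw [if_neg (by rw [Nat.even_iff]; rw [Nat.odd_iff] at ho; omega)]
      have hco : ((ν ^ 2 : Rˣ) : R) = q := by
        rw [Units.val_pow_eq_pow_val, pow_two, hqdef]
      rwa [hco] at h
  -- key commutation computations
  have key1 : ∀ A B y z f g : R, (∀ r : R, f * r = r * f) → (∀ r : R, g * r = r * g) →
      g * f = 1 → A * z = f * (z * A) → y * z = g * (z * y) → B * z = z * B →
      (w * (A * y - B)) * z = z * (w * (A * y - B)) := by
    intro A B y z f g hf hg hgf hAz hyz hBz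
    calc (w * (A * y - B)) * z = w * (A * (y * z)) - w * (B * z) := by noncomm_ring
      _ = w * (A * (g * (z * y))) - w * (z * B) := by rw [hyz, hBz]
      _ = w * ((A * g) * (z * y)) - w * (z * B) := by noncomm_ring
      _ = w * ((g * A) * (z * y)) - w * (z * B) := by rw [← hg A]
      _ = w * (g * ((A * z) * y)) - w * (z * B) := by noncomm_ring
      _ = w * (g * ((f * (z * A)) * y)) - w * (z * B) := by rw [hAz]
      _ = w * ((g * f) * ((z * A) * y)) - w * (z * B) := by noncomm_ring
      _ = w * ((1 : R) * ((z * A) * y)) - w * (z * B) := by rw [hgf]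
      _ = (w * z) * (A * y) - (w * z) * B := by noncomm_ring
      _ = (z * w) * (A * y) - (z * w) * B := by rw [hcw z]
      _ = z * (w * (A * y - B)) := by noncomm_ring
  have key2 : ∀ A B y z f : R, (∀ r : R, f * r = r * f) →
      A * z = z * A → y * z = f * (z * y) → B * z = f * (z * B) →
      (A * y - w * B) * z = f * (z * (A * y - w * B)) := by
    intro A B y z f hf hAz hyz hBz
    calc (A * y - w * B) * z = A * (y * z) - w * (B * z) := by noncomm_ring
      _ = A * (f * (z * y)) - w * (f * (z * B)) := by rw [hyz, hBz]
      _ = (A * f) * (z * y) - (w * f) * (z * B) := by noncomm_ring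
      _ = (f * A) * (z * y) - (f * w) * (z * B) := by rw [← hf A, ← hf w]
      _ = f * ((A * z) * y) - f * (w * (z * B)) := by noncomm_ring
      _ = f * ((z * A) * y) - f * ((w * z) * B) := by rw [hAz]; noncomm_ring
      _ = f * ((z * A) * y) - f * ((z * w) * B) := by rw [hcw z]
      _ = f * (z * (A * y - w * B)) := by noncomm_ring
  -- the commutation lemma for far-apart generators
  have Scomm : ∀ m : ℕ, ∀ i m' : ℕ, 1 ≤ i → m + 1 ≤ m' → i + m' ≤ n →
      P m i * x (i + m') =
        (if Even m then (1 : R) else if Even m' then qi else q) * (x (i + m') * P m i) := by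
    intro m
    induction m using Nat.strong_induction_on with
    | _ m IH =>
      intro i m' hi hm' hn'
      rcases m with _ | m1
      · rw [hP0, if_pos Even.zero, one_mul, one_mul, mul_one]
      rcases m1 with _ | k
      · rw [hP1, if_neg (by decide)]
        exact hR2' i m' hi (by omega) hn'
      · -- m = k + 2
        have hA := IH (k + 1) (by omega) i m' hi (by omega) hn'
        have hB := IH k (by omega) i m' hi (by omega) hn'
        have hy' := hR2' (i + (k + 1)) (m' - (k + 1)) (by omega) (by omega) (by omega)
        rw [show i + (k + 1) + (m' - (k + 1)) = i + m' from by omega] at hy'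
        rcases Nat.even_or_odd k with hk | hk
        · -- k even : P (k+2) i = w * (P (k+1) i * x (i+(k+1)) - P k i)
          have hk0 := Nat.even_iff.mp hk
          have hk2 : Even (k + 1 + 1) := Nat.even_iff.mpr (by omega)
          have hk1 : ¬ Even (k + 1) := by rw [Nat.even_iff]; omega
          have hrec : P (k + 1 + 1) i = w * (P (k + 1) i * x (i + (k + 1)) - P k i) := by
            have h := hPodd (k + 1) i (by omega) (Even.add_one hk) hi (by omega)
            rwa [show k + 1 - 1 = k from by omega] at h
          rw [if_pos hk2, one_mul, hrec]
          rw [if_neg hk1] at hA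
          rw [if_pos hk, one_mul] at hB
          rcases Nat.even_or_odd m' with hm'' | hm''
          · have hm0 := Nat.even_iff.mp hm''
            rw [if_pos hm''] at hA
            rw [if_neg (by rw [Nat.even_iff]; omega)] at hy'
            exact key1 (P (k + 1) i) (P k i) (x (i + (k + 1))) (x (i + m')) qi q hqi hq
              hqqi hA hy' hB
          · have hm0 := Nat.odd_iff.mp hm''
            rw [if_neg (by rw [Nat.even_iff]; omega)] at hA
            rw [if_pos (Nat.even_iff.mpr (by omega))] at hy'
            exact key1 (P (k + 1) i) (P k i) (x (i + (k + 1))) (x (i + m')) q qi hq hqi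
              hqiq hA hy' hB
        · -- k odd : P (k+2) i = P (k+1) i * x (i+(k+1)) - w * P k i
          have hk0 := Nat.odd_iff.mp hk
          have hk2 : ¬ Even (k + 1 + 1) := by rw [Nat.even_iff]; omega
          have hk1 : Even (k + 1) := Nat.even_iff.mpr (by omega)
          have hknev : ¬ Even k := by rw [Nat.even_iff]; omega
          have hrec : P (k + 1 + 1) i = P (k + 1) i * x (i + (k + 1)) - w * P k i := by
            have h := hPeven (k + 1) i (by omega) hk1 hi (by omega)
            rwa [show k + 1 - 1 = k from by omega] at h
          rw [if_neg hk2, hrec]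
          rw [if_pos hk1, one_mul] at hA
          rw [if_neg hknev] at hB
          rcases Nat.even_or_odd m' with hm'' | hm''
          · have hm0 := Nat.even_iff.mp hm''
            rw [if_pos hm''] at hB ⊢
            rw [if_pos (Nat.even_iff.mpr (by omega))] at hy'
            exact key2 (P (k + 1) i) (P k i) (x (i + (k + 1))) (x (i + m')) qi hqi
              hA hy' hB
          · have hm0 := Nat.odd_iff.mp hm''
            rw [if_neg (by rw [Nat.even_iff]; omega)] at hB ⊢
            rw [if_neg (by rw [Nat.even_iff]; omega)] at hy'
            exact key2 (P (k + 1) i) (P k i) (x (i + (k + 1))) (x (i + m')) q hq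
              hA hy' hB
  -- key computation for the main statement
  have key3 : ∀ D E y z : R, z * D = q * (D * z) → z * E = E * z →
      z * y = qi * (y * z) + (1 - qi) →
      z * (w * (D * y - E)) = (w * (D * y - E)) * z + ((ν : R) - w) * D := by
    intro D E y z hzD hzE hzy
    have hzDy : z * (D * y) = (D * y) * z + (q - 1) * D := by
      calc z * (D * y) = (z * D) * y := by noncomm_ring
        _ = (q * (D * z)) * y := by rw [hzD]
        _ = q * (D * (z * y)) := by noncomm_ring
        _ = q * (D * (qi * (y * z) + (1 - qi))) := by rw [hzy]
        _ = q * ((D * qi) * (y * z) + D - D * qi) := by noncomm_ring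
        _ = q * ((qi * D) * (y * z) + D - qi * D) := by rw [← hqi D]
        _ = (q * qi) * (D * (y * z)) + q * D - (q * qi) * D := by noncomm_ring
        _ = (1 : R) * (D * (y * z)) + q * D - (1 : R) * D := by rw [hqqi]
        _ = (D * y) * z + (q - 1) * D := by noncomm_ring
    calc z * (w * (D * y - E)) = (z * w) * (D * y - E) := by noncomm_ring
      _ = (w * z) * (D * y - E) := by rw [← hcw z]
      _ = w * (z * (D * y)) - w * (z * E) := by noncomm_ring
      _ = w * ((D * y) * z + (q - 1) * D) - w * (E * z) := by rw [hzDy, hzE]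
      _ = (w * (D * y - E)) * z + (w * q) * D - w * D := by noncomm_ring
      _ = (w * (D * y - E)) * z + (ν : R) * D - w * D := by rw [hwq]
      _ = (w * (D * y - E)) * z + ((ν : R) - w) * D := by noncomm_ring
  -- main proof
  intro m i hm hmev hi hin
  have hm2 : 2 ≤ m := by rcases hmev with ⟨t, ht⟩; omega
  have hoddm1 : Odd (m - 1) := Nat.Even.sub_odd (by omega) hmev odd_one
  have hrec : P m i = w * (P (m - 1) i * x (i + m - 1) - P (m - 2) i) := by
    have h := hPodd (m - 1) i (by omega) hoddm1 hi (by omega)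
    rwa [show m - 1 + 1 = m from by omega, show m - 1 - 1 = m - 2 from by omega,
        show i + (m - 1) = i + m - 1 from by omega] at h
  have hD := Scomm (m - 1) i m hi (by omega) hin
  rw [if_neg (by have h1 := Nat.odd_iff.mp hoddm1; rw [Nat.even_iff]; omega),
      if_pos hmev] at hD
  have hzD : x (i + m) * P (m - 1) i = q * (P (m - 1) i * x (i + m)) := by
    rw [hD, ← mul_assoc, hqqi, one_mul]
  have hE := Scomm (m - 2) i m hi (by omega) hin
  rw [if_pos (by have h1 := Nat.even_iff.mp hmev; exact Nat.even_iff.mpr (by omega)),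
      one_mul] at hE
  have hzy : x (i + m) * x (i + m - 1) = qi * (x (i + m - 1) * x (i + m)) + (1 - qi) := by
    have h := hR1' (i + m - 1) (by omega) (by omega)
    rwa [show i + m - 1 + 1 = i + m from by omega] at h
  have hkey := key3 (P (m - 1) i) (P (m - 2) i) (x (i + m - 1)) (x (i + m)) hzD hE.symm hzy
  rw [hPeven m i hm hmev hi hin, hrec, hkey]
  noncomm_ring
end

section
/- Reversed recursion for quantum signed continuant polynomials, odd case: for every odd integer m ≥ 1 and every 1 ≤ i ≤ n − m, one has P_{m+1,i} = ν (x_{i+m} P_{m,i} − P_{m−1,i}). -/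
theorem reversed_recursion_odd_case
    (R : Type*) [Ring R] (n : ℕ) (hn : 1 ≤ n)
    (ν : Rˣ) (hcen : ∀ r : R, (ν : R) * r = r * (ν : R))
    (x : ℕ → R)
    (hR1 : ∀ i, 1 ≤ i → i < n →
      x i * x (i + 1) - 1 = ((ν : R) ^ 2) * (x (i + 1) * x i - 1))
    (hR2 : ∀ i k, 1 ≤ i → 1 < k → i + k ≤ n →
      x i * x (i + k) = (((ν ^ 2 : Rˣ) ^ ((-1 : ℤ) ^ (k - 1)) : Rˣ) : R) * (x (i + k) * x i))
    (P : ℕ → ℕ → R)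
    (hP0 : ∀ i, P 0 i = 1)
    (hP1 : ∀ i, P 1 i = x i)
    (hPeven : ∀ m i, 1 ≤ m → Even m → 1 ≤ i → i + m ≤ n →
      P (m + 1) i = P m i * x (i + m) - ((ν⁻¹ : Rˣ) : R) * P (m - 1) i)
    (hPodd : ∀ m i, 1 ≤ m → Odd m → 1 ≤ i → i + m ≤ n →
      P (m + 1) i = ((ν⁻¹ : Rˣ) : R) * (P m i * x (i + m) - P (m - 1) i)) :
    ∀ m i, 1 ≤ m → Odd m → 1 ≤ i → i + m ≤ n →
      P (m + 1) i = (ν : R) * (x (i + m) * P m i - P (m - 1) i) := by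
  set w : R := ((ν⁻¹ : Rˣ) : R) with hwdef
  set q : R := (ν : R) ^ 2 with hqdef
  -- centrality of q
  have hq : ∀ r : R, q * r = r * q := by
    intro r
    rw [hqdef, sq, mul_assoc, hcen r, ← mul_assoc, hcen r, mul_assoc]
  -- centrality of w
  have hw : ∀ r : R, w * r = r * w := by
    intro r
    have h1 : (ν : R) * (w * r) = r := by
      rw [← mul_assoc, hwdef, Units.mul_inv, one_mul]
    have h2 : (ν : R) * (r * w) = r := by
      rw [← mul_assoc, hcen r, mul_assoc, hwdef, Units.mul_inv, mul_one]
    calc w * r = ((ν⁻¹ : Rˣ) : R) * ((ν : R) * (w * r)) := by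
          rw [h1, hwdef]
      _ = ((ν⁻¹ : Rˣ) : R) * ((ν : R) * (r * w)) := by rw [h1, h2]
      _ = r * w := by rw [← mul_assoc, Units.inv_mul, one_mul]
  have hql : ∀ a b : R, a * (q * b) = q * (a * b) := by
    intro a b; rw [← mul_assoc, ← hq a, mul_assoc]
  have hwl : ∀ a b : R, a * (w * b) = w * (a * b) := by
    intro a b; rw [← mul_assoc, ← hw a, mul_assoc]
  -- cancellation of q
  have hcq : ∀ a b : R, q * a = q * b → a = b := by
    intro a b h
    rw [hqdef, ← Units.val_pow_eq_pow_val] at h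
    calc a = ((((ν ^ 2)⁻¹ : Rˣ)) : R) * (((ν ^ 2 : Rˣ) : R) * a) :=
          (Units.inv_mul_cancel_left _ _).symm
      _ = ((((ν ^ 2)⁻¹ : Rˣ)) : R) * (((ν ^ 2 : Rˣ) : R) * b) := by rw [h]
      _ = b := Units.inv_mul_cancel_left _ _
  -- reformulations of (R2)
  have r2odd : ∀ a c, 1 ≤ a → 1 < c → Odd c → a + c ≤ n →
      x a * x (a + c) = q * (x (a + c) * x a) := by
    intro a c ha hc hco hn'
    have h := hR2 a c ha hc hn'
    have he : ((-1 : ℤ) ^ (c - 1)) = 1 := by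
      apply Even.neg_one_pow
      rcases hco with ⟨s, hs⟩
      exact ⟨s, by omega⟩
    rw [he, zpow_one] at h
    rw [h, Units.val_pow_eq_pow_val, ← hqdef]
  have r2even : ∀ a c, 1 ≤ a → 1 < c → Even c → a + c ≤ n →
      q * (x a * x (a + c)) = x (a + c) * x a := by
    intro a c ha hc hce hn'
    have h := hR2 a c ha hc hn'
    have he : ((-1 : ℤ) ^ (c - 1)) = -1 := by
      apply Odd.neg_one_pow
      rcases hce with ⟨s, hs⟩
      exact ⟨s - 1, by omega⟩
    rw [he, zpow_neg_one] at h
    rw [h, hqdef, ← Units.val_pow_eq_pow_val]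
    exact Units.mul_inv_cancel_left _ _
  -- the commutation lemma
  have key : ∀ m i k : ℕ, 1 ≤ i → m + 1 ≤ k → i + k ≤ n →
      (Even m → P m i * x (i + k) = x (i + k) * P m i) ∧
      (Odd m → (Odd k → P m i * x (i + k) = q * (x (i + k) * P m i)) ∧
        (Even k → q * (P m i * x (i + k)) = x (i + k) * P m i)) := by
    intro m
    induction m using Nat.strong_induction_on with
    | _ m IH =>
      rcases m with _ | m1
      · intro i k hi hk hkn
        constructor
        · intro _; rw [hP0, one_mul, mul_one]
        · intro h; exact absurd h (by decide)
      rcases m1 with _ | t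
      · intro i k hi hk hkn
        constructor
        · intro h; exact absurd h (by decide)
        · intro _
          refine ⟨fun hko => ?_, fun hke => ?_⟩
          · rw [hP1]; exact r2odd i k hi (by omega) hko hkn
          · rw [hP1]; exact r2even i k hi (by omega) hke hkn
      · intro i k hi hk hkn
        have hi1 : i + (t + 1) ≤ n := by omega
        have hk2 : 1 < k - (t + 1) := by omega
        have hac : i + t + 1 + (k - (t + 1)) = i + k := by omega
        have hA := IH (t + 1) (by omega) i k hi (by omega) hkn
        have hB := IH t (by omega) i k hi (by omega) hkn
        rcases Nat.even_or_odd t with hte | hto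
        · -- t even, m = t+2 even
          have ht1odd : Odd (t + 1) := Even.add_one hte
          have hrec := hPodd (t + 1) i (by omega) ht1odd hi hi1
          rw [show i + (t + 1) = i + t + 1 from rfl, show t + 1 - 1 = t from rfl] at hrec
          have f3 := hB.1 hte
          constructor
          · intro _
            rw [hrec]
            set A := P (t + 1) i
            set B := P t i
            set X := x (i + k)
            set Y := x (i + t + 1)
            rcases Nat.even_or_odd k with hke | hko
            · -- k even, gap odd
              have hko' : Odd (k - (t + 1)) := by
                rw [Nat.odd_iff]
                rw [Nat.even_iff] at hke hte
                omega
              have f1 := r2odd (i + t + 1) (k - (t + 1)) (by omega) hk2 hko' (by omega)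
              rw [hac] at f1
              have f2 := (hA.2 ht1odd).2 hke
              calc w * (A * Y - B) * X
                  = w * (A * (Y * X) - B * X) := by noncomm_ring
                _ = w * (A * (q * (X * Y)) - X * B) := by rw [f1, f3]
                _ = w * (q * (A * (X * Y)) - X * B) := by rw [hql]
                _ = w * ((q * (A * X)) * Y - X * B) := by noncomm_ring
                _ = w * ((X * A) * Y - X * B) := by rw [f2]
                _ = w * (X * (A * Y - B)) := by noncomm_ring
                _ = X * (w * (A * Y - B)) := (hwl _ _).symm
            · -- k odd, gap even
              have hke' : Even (k - (t + 1)) := by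
                rw [Nat.even_iff]
                rw [Nat.odd_iff] at hko
                rw [Nat.even_iff] at hte
                omega
              have g1 := r2even (i + t + 1) (k - (t + 1)) (by omega) hk2 hke' (by omega)
              rw [hac] at g1
              have f2' := (hA.2 ht1odd).1 hko
              apply hcq
              calc q * (w * (A * Y - B) * X)
                  = q * (w * ((A * Y - B) * X)) := by noncomm_ring
                _ = w * (q * ((A * Y - B) * X)) := (hql _ _).symm
                _ = w * (q * (A * (Y * X)) - q * (B * X)) := by noncomm_ring
                _ = w * (A * (q * (Y * X)) - q * (B * X)) := by rw [hql]
                _ = w * (A * (X * Y) - q * (X * B)) := by rw [g1, f3]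
                _ = w * ((A * X) * Y - q * (X * B)) := by noncomm_ring
                _ = w * ((q * (X * A)) * Y - q * (X * B)) := by rw [f2']
                _ = w * (q * ((X * A) * Y - X * B)) := by noncomm_ring
                _ = q * (w * ((X * A) * Y - X * B)) := hql _ _
                _ = q * (w * (X * (A * Y - B))) := by noncomm_ring
                _ = q * (X * (w * (A * Y - B))) := by rw [← hwl X]
          · intro h
            exfalso
            rw [Nat.odd_iff] at h
            rw [Nat.even_iff] at hte
            omega
        · -- t odd, m = t+2 odd
          have ht1even : Even (t + 1) := Odd.add_one hto
          have hrec := hPeven (t + 1) i (by omega) ht1even hi hi1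
          rw [show i + (t + 1) = i + t + 1 from rfl, show t + 1 - 1 = t from rfl] at hrec
          have f2 := hA.1 ht1even
          constructor
          · intro h
            exfalso
            rw [Nat.even_iff] at h
            rw [Nat.odd_iff] at hto
            omega
          · intro _
            rw [hrec]
            set A := P (t + 1) i
            set B := P t i
            set X := x (i + k)
            set Y := x (i + t + 1)
            refine ⟨fun hko => ?_, fun hke => ?_⟩
            · -- k odd, gap odd
              have hko' : Odd (k - (t + 1)) := by
                rw [Nat.odd_iff]
                rw [Nat.odd_iff] at hko hto
                omega
              have f1 := r2odd (i + t + 1) (k - (t + 1)) (by omega) hk2 hko' (by omega)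
              rw [hac] at f1
              have f3 := (hB.2 hto).1 hko
              calc (A * Y - w * B) * X
                  = A * (Y * X) - w * (B * X) := by noncomm_ring
                _ = A * (q * (X * Y)) - w * (q * (X * B)) := by rw [f1, f3]
                _ = q * (A * (X * Y)) - q * (w * (X * B)) := by rw [hql, hql]
                _ = q * ((A * X) * Y - w * (X * B)) := by noncomm_ring
                _ = q * ((X * A) * Y - X * (w * B)) := by rw [f2, ← hwl X]
                _ = q * (X * (A * Y - w * B)) := by noncomm_ring
            · -- k even, gap even
              have hke' : Even (k - (t + 1)) := by
                rw [Nat.even_iff]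
                rw [Nat.even_iff] at hke
                rw [Nat.odd_iff] at hto
                omega
              have g1 := r2even (i + t + 1) (k - (t + 1)) (by omega) hk2 hke' (by omega)
              rw [hac] at g1
              have g3 := (hB.2 hto).2 hke
              calc q * ((A * Y - w * B) * X)
                  = q * (A * (Y * X)) - q * (w * (B * X)) := by noncomm_ring
                _ = A * (q * (Y * X)) - w * (q * (B * X)) := by rw [hql, hql]
                _ = A * (X * Y) - w * (X * B) := by rw [g1, g3]
                _ = (A * X) * Y - w * (X * B) := by noncomm_ring
                _ = (X * A) * Y - X * (w * B) := by rw [f2, ← hwl X]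
                _ = X * (A * Y - w * B) := by noncomm_ring
  -- the reversed comparison identity
  have C : ∀ m : ℕ, Odd m → ∀ i : ℕ, 1 ≤ i → i + m ≤ n →
      P m i * x (i + m) - P (m - 1) i = q * (x (i + m) * P m i - P (m - 1) i) := by
    intro m
    rcases m with _ | m1
    · intro h; exact absurd h (by decide)
    rcases m1 with _ | t
    · intro _ i hi him
      rw [show (0 : ℕ) + 1 = 1 from rfl] at *
      rw [show (1 : ℕ) - 1 = 0 from rfl, hP0, hP1]
      exact hR1 i hi (by omega)
    · intro hoddm i hi him
      have hto : Odd t := by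
        rcases hoddm with ⟨s, hs⟩
        exact ⟨s - 1, by omega⟩
      have ht1even : Even (t + 1) := Odd.add_one hto
      rw [show t + 1 + 1 - 1 = t + 1 from rfl,
        show i + (t + 1 + 1) = i + t + 2 from rfl]
      have hrec := hPeven (t + 1) i (by omega) ht1even hi (by omega)
      rw [show i + (t + 1) = i + t + 1 from rfl, show t + 1 - 1 = t from rfl] at hrec
      have e1 := hR1 (i + t + 1) (by omega) (by omega)
      rw [show i + t + 1 + 1 = i + t + 2 from rfl] at e1
      have e1' := eq_add_of_sub_eq e1
      have f2 := (key (t + 1) i (t + 2) hi (by omega) (by omega)).1 ht1even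
      rw [show i + (t + 2) = i + t + 2 from rfl] at f2
      have f3 := ((key t i (t + 2) hi (by omega) (by omega)).2 hto).1 (by
        rcases hto with ⟨s, hs⟩; exact ⟨s + 1, by omega⟩)
      rw [show i + (t + 2) = i + t + 2 from rfl] at f3
      rw [hrec]
      set A := P (t + 1) i
      set B := P t i
      set X := x (i + t + 2)
      set Y := x (i + t + 1)
      calc (A * Y - w * B) * X - A
          = A * (Y * X) - w * (B * X) - A := by noncomm_ring
        _ = A * (q * (X * Y - 1) + 1) - w * (q * (X * B)) - A := by rw [e1', f3]
        _ = A * (q * (X * Y - 1)) - w * (q * (X * B)) := by noncomm_ring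
        _ = q * (A * (X * Y - 1)) - q * (w * (X * B)) := by rw [hql, hql]
        _ = q * ((A * X) * Y - A - w * (X * B)) := by noncomm_ring
        _ = q * ((X * A) * Y - A - X * (w * B)) := by rw [f2, ← hwl X]
        _ = q * (X * (A * Y - w * B) - A) := by noncomm_ring
  -- conclusion
  intro m i hm hodd hi him
  have hrec := hPodd m i hm hodd hi him
  have hc := C m hodd i hi him
  have hwq : w * q = (ν : R) := by
    rw [hwdef, hqdef, sq, ← mul_assoc, Units.inv_mul, one_mul]
  rw [hrec, hc, ← mul_assoc, hwq]
end

section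
/- Commutation of quantum signed continuant polynomials with distant variables, odd case: for every odd integer m ≥ 1, every integer k > 1 and every i ≥ 1 with i + m − 1 + k ≤ n, one has P_{m,i} x_{i+m−1+k} = q^{(−1)^{k−1}} x_{i+m−1+k} P_{m,i}. -/
theorem commutation_with_distant_variables_odd_case
    (R : Type*) [Ring R] (n : ℕ) (hn : 1 ≤ n)
    (ν : Rˣ) (hcen : ∀ r : R, (ν : R) * r = r * (ν : R))
    (x : ℕ → R)
    (hR1 : ∀ i, 1 ≤ i → i < n →
      x i * x (i + 1) - 1 = ((ν : R) ^ 2) * (x (i + 1) * x i - 1))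
    (hR2 : ∀ i k, 1 ≤ i → 1 < k → i + k ≤ n →
      x i * x (i + k) = (((ν ^ 2 : Rˣ) ^ ((-1 : ℤ) ^ (k - 1)) : Rˣ) : R) * (x (i + k) * x i))
    (P : ℕ → ℕ → R)
    (hP0 : ∀ i, P 0 i = 1)
    (hP1 : ∀ i, P 1 i = x i)
    (hPeven : ∀ m i, 1 ≤ m → Even m → 1 ≤ i → i + m ≤ n →
      P (m + 1) i = P m i * x (i + m) - ((ν⁻¹ : Rˣ) : R) * P (m - 1) i)
    (hPodd : ∀ m i, 1 ≤ m → Odd m → 1 ≤ i → i + m ≤ n →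
      P (m + 1) i = ((ν⁻¹ : Rˣ) : R) * (P m i * x (i + m) - P (m - 1) i)) :
    ∀ m k i, 1 ≤ m → Odd m → 1 < k → 1 ≤ i → i + m - 1 + k ≤ n →
      P m i * x (i + m - 1 + k) =
        (((ν ^ 2 : Rˣ) ^ ((-1 : ℤ) ^ (k - 1)) : Rˣ) : R) * (x (i + m - 1 + k) * P m i) := by
  -- centrality of powers of ν
  have hcom : ∀ r : R, Commute (ν : R) r := fun r => hcen r
  have hc : ∀ (e : ℤ) (r : R),
      (((ν ^ 2 : Rˣ) ^ e : Rˣ) : R) * r = r * (((ν ^ 2 : Rˣ) ^ e : Rˣ) : R) := by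
    intro e r
    have h2 : Commute ((ν ^ 2 : Rˣ) : R) r := by
      have := (hcom r).pow_left 2
      simpa using this
    exact (h2.units_zpow_left e).eq
  have hcinv : ∀ r : R, ((ν⁻¹ : Rˣ) : R) * r = r * ((ν⁻¹ : Rˣ) : R) := by
    intro r
    exact ((hcom r).units_inv_left).eq
  have hmul : ∀ a b : ℤ,
      (((ν ^ 2 : Rˣ) ^ a : Rˣ) : R) * (((ν ^ 2 : Rˣ) ^ b : Rˣ) : R)
        = (((ν ^ 2 : Rˣ) ^ (a + b) : Rˣ) : R) := by
    intro a b
    rw [← Units.val_mul, ← zpow_add]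
  -- combinators for "semiconjugation with a central constant"
  have cen_mul : ∀ a b z c d : R, (∀ r, d * r = r * d) →
      a * z = c * (z * a) → b * z = d * (z * b) →
      a * b * z = c * d * (z * (a * b)) := by
    intro a b z c d hd ha hb
    calc a * b * z = a * (b * z) := by rw [mul_assoc]
      _ = a * (d * (z * b)) := by rw [hb]
      _ = a * d * (z * b) := by rw [mul_assoc]
      _ = d * a * (z * b) := by rw [hd a]
      _ = d * (a * z * b) := by rw [mul_assoc, ← mul_assoc a z b]
      _ = d * (c * (z * a) * b) := by rw [ha]
      _ = c * d * (z * (a * b)) := by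
          rw [mul_assoc c, ← mul_assoc d, hd c, mul_assoc z a b]
  have cen_scal : ∀ a z c s : R, (∀ r, s * r = r * s) →
      a * z = c * (z * a) → s * a * z = c * (z * (s * a)) := by
    intro a z c s hs ha
    calc s * a * z = s * (a * z) := by rw [mul_assoc]
      _ = s * (c * (z * a)) := by rw [ha]
      _ = c * (s * (z * a)) := by rw [← mul_assoc, hs c, mul_assoc]
      _ = c * (s * z * a) := by rw [← mul_assoc s z a]
      _ = c * (z * s * a) := by rw [hs z]
      _ = c * (z * (s * a)) := by rw [mul_assoc z s a]
  have cen_sub : ∀ a b z c : R, a * z = c * (z * a) → b * z = c * (z * b) →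
      (a - b) * z = c * (z * (a - b)) := by
    intro a b z c ha hb
    rw [sub_mul, ha, hb, mul_sub, mul_sub]
  -- the main claim, for all m (even or odd), stated with an `if`
  have key : ∀ m k i j : ℕ, 1 ≤ i → 1 < k → j = i + m - 1 + k → j ≤ n →
      P m i * x j =
        (((ν ^ 2 : Rˣ) ^ (if m % 2 = 1 then (-1 : ℤ) ^ (k - 1) else 0) : Rˣ) : R)
          * (x j * P m i) := by
    intro m
    induction m using Nat.twoStepInduction with
    | zero =>
      intro k i j hi hk hj hjn
      simp [hP0]
    | one =>
      intro k i j hi hk hj hjn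
      have hj' : j = i + k := by omega
      subst hj'
      rw [hP1]
      simpa using hR2 i k hi hk hjn
    | more m ih ih1 =>
      intro k i j hi hk hj hjn
      have hj' : j = i + m + 1 + k := by omega
      have hin : i + (m + 1) ≤ n := by omega
      -- commutation of the last variable with x j
      have h3 : x (i + m + 1) * x j =
          (((ν ^ 2 : Rˣ) ^ ((-1 : ℤ) ^ (k - 1)) : Rˣ) : R) * (x j * x (i + m + 1)) := by
        have := hR2 (i + m + 1) k (by omega) hk (by omega)
        rw [show i + m + 1 + k = j from by omega] at this
        exact this
      have h1 := ih1 (k + 1) i j hi (by omega) (by omega) hjn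
      have h2 := ih (k + 2) i j hi (by omega) (by omega) hjn
      simp only [Nat.add_sub_cancel] at h1 h2
      rcases Nat.even_or_odd m with hme | hmo
      · -- m even, m+1 odd, m+2 even : exponent 0
        have hm0' : m % 2 = 0 := Nat.even_iff.mp hme
        have hm1 : (m + 1) % 2 = 1 := by omega
        have hm0 : m % 2 = 0 := by omega
        have hm2 : (m + 2) % 2 = 0 := by omega
        rw [if_pos hm1] at h1
        rw [if_neg (by omega : ¬ m % 2 = 1)] at h2
        simp only [zpow_zero, Units.val_one, one_mul] at h2
        -- recursion for P (m+2)
        have hrec := hPodd (m + 1) i (by omega) (Nat.odd_iff.mpr (by omega)) hi hin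
        simp only [Nat.add_sub_cancel] at hrec
        have hAB := cen_mul (P (m + 1) i) (x (i + m + 1)) (x j) _ _
          (hc ((-1 : ℤ) ^ (k - 1))) h1 h3
        rw [hmul] at hAB
        have hexp : (-1 : ℤ) ^ k + (-1 : ℤ) ^ (k - 1) = 0 := by
          have : (-1 : ℤ) ^ k = -(-1 : ℤ) ^ (k - 1) := by
            conv_lhs => rw [show k = (k - 1) + 1 from by omega]
            rw [pow_succ]; ring
          rw [this]; ring
        rw [hexp] at hAB
        simp only [zpow_zero, Units.val_one, one_mul] at hAB
        have h2' : P m i * x j = (1 : R) * (x j * P m i) := by rw [one_mul]; exact h2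
        have hAB' : P (m + 1) i * x (i + m + 1) * x j
            = (1 : R) * (x j * (P (m + 1) i * x (i + m + 1))) := by
          rw [one_mul]; exact hAB
        have hsub := cen_sub _ _ (x j) (1 : R) hAB' h2'
        have hfin := cen_scal _ (x j) (1 : R) ((ν⁻¹ : Rˣ) : R) hcinv hsub
        rw [if_neg (by omega : ¬ (m + 2) % 2 = 1)]
        simp only [zpow_zero, Units.val_one, one_mul]
        calc P (m + 2) i * x j
            = ((ν⁻¹ : Rˣ) : R) * (P (m + 1) i * x (i + (m + 1)) - P m i) * x j := by
              rw [hrec]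
          _ = x j * (((ν⁻¹ : Rˣ) : R) * (P (m + 1) i * x (i + (m + 1)) - P m i)) := by
              have : i + (m + 1) = i + m + 1 := by omega
              rw [this]
              rw [hfin, one_mul]
          _ = x j * P (m + 2) i := by rw [← hrec]
      · -- m odd, m+1 even, m+2 odd : exponent (-1)^(k-1)
        have hm1' : m % 2 = 1 := Nat.odd_iff.mp hmo
        have hm1 : (m + 1) % 2 = 0 := by omega
        rw [if_neg (by omega : ¬ (m + 1) % 2 = 1)] at h1
        simp only [zpow_zero, Units.val_one, one_mul] at h1
        rw [if_pos (by omega : m % 2 = 1)] at h2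
        have hexp2 : (-1 : ℤ) ^ (k + 2 - 1) = (-1 : ℤ) ^ (k - 1) := by
          rw [show k + 2 - 1 = (k - 1) + 2 from by omega, pow_add]; ring
        rw [hexp2] at h2
        -- recursion for P (m+2), via hPeven at m+1
        have hrec := hPeven (m + 1) i (by omega) (Nat.even_iff.mpr (by omega)) hi hin
        simp only [Nat.add_sub_cancel] at hrec
        have h1' : P (m + 1) i * x j
            = (1 : R) * (x j * P (m + 1) i) := by rw [one_mul]; exact h1
        have hAB := cen_mul (P (m + 1) i) (x (i + m + 1)) (x j) (1 : R) _
          (hc ((-1 : ℤ) ^ (k - 1))) h1' h3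
        rw [one_mul] at hAB
        have hs := cen_scal (P m i) (x j) _ ((ν⁻¹ : Rˣ) : R) hcinv h2
        have hsub := cen_sub _ _ (x j) _ hAB hs
        rw [if_pos (by omega : (m + 2) % 2 = 1)]
        calc P (m + 2) i * x j
            = (P (m + 1) i * x (i + (m + 1)) - ((ν⁻¹ : Rˣ) : R) * P m i) * x j := by
              rw [hrec]
          _ = (((ν ^ 2 : Rˣ) ^ ((-1 : ℤ) ^ (k - 1)) : Rˣ) : R)
              * (x j * (P (m + 1) i * x (i + (m + 1)) - ((ν⁻¹ : Rˣ) : R) * P m i)) := by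
              have : i + (m + 1) = i + m + 1 := by omega
              rw [this]
              exact hsub
          _ = (((ν ^ 2 : Rˣ) ^ ((-1 : ℤ) ^ (k - 1)) : Rˣ) : R) * (x j * P (m + 2) i) := by
              rw [← hrec]
  intro m k i hm hmo hk hi hle
  have := key m k i (i + m - 1 + k) hi hk rfl hle
  rwa [if_pos (Nat.odd_iff.mp hmo)] at this
end

section
/- Commutation of quantum signed continuant polynomials with distant variables, even case: for every even integer m ≥ 2, every integer k > 1 and every i ≥ 1 with i + m − 1 + k ≤ n, one has P_{m,i} x_{i+m−1+k} = x_{i+m−1+k} P_{m,i}. -/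
private lemma inv_central' {R : Type*} [Ring R] (w : Rˣ)
    (h : ∀ r : R, (w : R) * r = r * (w : R)) :
    ∀ r : R, ((w⁻¹ : Rˣ) : R) * r = r * ((w⁻¹ : Rˣ) : R) := by
  intro r
  calc ((w⁻¹ : Rˣ) : R) * r
      = ((w⁻¹ : Rˣ) : R) * ((w : R) * r) * ((w⁻¹ : Rˣ) : R) := by
        rw [h r, mul_assoc, mul_assoc, Units.mul_inv, mul_one]
    _ = r * ((w⁻¹ : Rˣ) : R) := by
        rw [← mul_assoc, Units.inv_mul, one_mul]

private lemma comm_mul' {R : Type*} [Ring R] (y c1 c2 a b : R)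
    (hc2 : ∀ r, c2 * r = r * c2)
    (ha : a * y = c1 * (y * a)) (hb : b * y = c2 * (y * b)) :
    a * b * y = c1 * c2 * (y * (a * b)) := by
  calc a * b * y = a * (c2 * (y * b)) := by rw [mul_assoc, hb]
    _ = c2 * a * (y * b) := by rw [← mul_assoc, ← hc2 a]
    _ = c2 * (c1 * (y * a) * b) := by rw [mul_assoc, ← mul_assoc a y b, ha]
    _ = c1 * c2 * (y * (a * b)) := by rw [← hc2 c1]; simp [mul_assoc]

def Stmt (R : Type*) [Ring R] (n : ℕ) (ν : Rˣ) (x : ℕ → R) (P : ℕ → ℕ → R) (m : ℕ) : Prop :=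
  ∀ k i, 1 < k → 1 ≤ i → i + m - 1 + k ≤ n →
    (Even m → P m i * x (i + m - 1 + k) = x (i + m - 1 + k) * P m i) ∧
    (Odd m → P m i * x (i + m - 1 + k) =
      (((ν ^ 2 : Rˣ) ^ ((-1 : ℤ) ^ (k - 1)) : Rˣ) : R) * (x (i + m - 1 + k) * P m i))

private lemma stmt_zero {R : Type*} [Ring R] (n : ℕ) (ν : Rˣ) (x : ℕ → R) (P : ℕ → ℕ → R)
    (hP0 : ∀ i, P 0 i = 1) : Stmt R n ν x P 0 := by
  intro k i hk hi hle
  constructor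
  · intro _; rw [hP0, one_mul, mul_one]
  · intro h; simp [Nat.odd_iff] at h

private lemma stmt_one {R : Type*} [Ring R] (n : ℕ) (ν : Rˣ) (x : ℕ → R) (P : ℕ → ℕ → R)
    (hR2 : ∀ i k, 1 ≤ i → 1 < k → i + k ≤ n →
      x i * x (i + k) = (((ν ^ 2 : Rˣ) ^ ((-1 : ℤ) ^ (k - 1)) : Rˣ) : R) * (x (i + k) * x i))
    (hP1 : ∀ i, P 1 i = x i) : Stmt R n ν x P 1 := by
  intro k i hk hi hle
  constructor
  · intro h; simp [Nat.even_iff] at h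
  · intro _
    have e : i + 1 - 1 + k = i + k := by omega
    rw [e, hP1]
    exact hR2 i k hi hk (by omega)

private lemma stmt_step {R : Type*} [Ring R] (n : ℕ) (ν : Rˣ) (x : ℕ → R) (P : ℕ → ℕ → R)
    (hcen : ∀ r : R, (ν : R) * r = r * (ν : R))
    (hR2 : ∀ i k, 1 ≤ i → 1 < k → i + k ≤ n →
      x i * x (i + k) = (((ν ^ 2 : Rˣ) ^ ((-1 : ℤ) ^ (k - 1)) : Rˣ) : R) * (x (i + k) * x i))
    (hPeven : ∀ m i, 1 ≤ m → Even m → 1 ≤ i → i + m ≤ n →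
      P (m + 1) i = P m i * x (i + m) - ((ν⁻¹ : Rˣ) : R) * P (m - 1) i)
    (hPodd : ∀ m i, 1 ≤ m → Odd m → 1 ≤ i → i + m ≤ n →
      P (m + 1) i = ((ν⁻¹ : Rˣ) : R) * (P m i * x (i + m) - P (m - 1) i))
    (m : ℕ) (h0 : Stmt R n ν x P m) (h1 : Stmt R n ν x P (m + 1)) :
    Stmt R n ν x P (m + 2) := by
  -- centrality facts
  have hq2 : ∀ r : R, ((ν ^ 2 : Rˣ) : R) * r = r * ((ν ^ 2 : Rˣ) : R) := by
    intro r
    rw [Units.val_pow_eq_pow_val, sq, mul_assoc, hcen r, ← mul_assoc, hcen r, mul_assoc]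
  have hνinv : ∀ r : R, ((ν⁻¹ : Rˣ) : R) * r = r * ((ν⁻¹ : Rˣ) : R) := inv_central' ν hcen
  have hucen : ∀ (k : ℕ) (r : R),
      (((ν ^ 2 : Rˣ) ^ ((-1 : ℤ) ^ (k - 1)) : Rˣ) : R) * r
        = r * (((ν ^ 2 : Rˣ) ^ ((-1 : ℤ) ^ (k - 1)) : Rˣ) : R) := by
    intro k r
    rcases Nat.even_or_odd (k - 1) with h | h
    · rw [h.neg_one_pow, zpow_one]; exact hq2 r
    · rw [h.neg_one_pow, zpow_neg_one]; exact inv_central' (ν ^ 2) hq2 r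
  intro k i hk hi hle
  have hj : i + (m + 2) - 1 + k = i + (m + 1) + k := by omega
  rw [hj]
  have hxa : x (i + (m + 1)) * x (i + (m + 1) + k)
      = (((ν ^ 2 : Rˣ) ^ ((-1 : ℤ) ^ (k - 1)) : Rˣ) : R)
        * (x (i + (m + 1) + k) * x (i + (m + 1))) :=
    hR2 (i + (m + 1)) k (by omega) hk (by omega)
  rcases Nat.even_or_odd m with hme | hmo
  · -- m even, so m+2 even, m+1 odd
    constructor
    · intro _
      have hAodd := (h1 (k + 1) i (by omega) hi (by omega)).2 (Even.add_one hme)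
      have e1 : i + (m + 1) - 1 + (k + 1) = i + (m + 1) + k := by omega
      rw [e1] at hAodd
      have hPm := (h0 (k + 2) i (by omega) hi (by omega)).1 hme
      have e2 : i + m - 1 + (k + 2) = i + (m + 1) + k := by omega
      rw [e2] at hPm
      have hrec := hPodd (m + 1) i (by omega) (Even.add_one hme) hi (by omega)
      rw [Nat.add_sub_cancel, show m + 1 + 1 = m + 2 from rfl] at hrec
      have hprod := comm_mul' (x (i + (m + 1) + k))
        (((ν ^ 2 : Rˣ) ^ ((-1 : ℤ) ^ (k + 1 - 1)) : Rˣ) : R)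
        (((ν ^ 2 : Rˣ) ^ ((-1 : ℤ) ^ (k - 1)) : Rˣ) : R)
        (P (m + 1) i) (x (i + (m + 1))) (hucen k) hAodd hxa
      have hu1 : (((ν ^ 2 : Rˣ) ^ ((-1 : ℤ) ^ (k + 1 - 1)) : Rˣ) : R)
          * (((ν ^ 2 : Rˣ) ^ ((-1 : ℤ) ^ (k - 1)) : Rˣ) : R) = 1 := by
        rw [← Units.val_mul, ← zpow_add]
        have hz : (-1 : ℤ) ^ (k + 1 - 1) + (-1 : ℤ) ^ (k - 1) = 0 := by
          rw [show k + 1 - 1 = (k - 1) + 1 from by omega, pow_succ]; ring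
        rw [hz, zpow_zero, Units.val_one]
      rw [hu1, one_mul] at hprod
      rw [hrec, mul_assoc, sub_mul, hprod, hPm, ← mul_sub, ← mul_assoc,
        hνinv (x (i + (m + 1) + k)), mul_assoc]
    · intro h
      exfalso
      rcases hme with ⟨t, ht⟩
      rcases h with ⟨s, hs⟩
      omega
  · -- m odd, so m+2 odd, m+1 even
    constructor
    · intro h
      exfalso
      rcases hmo with ⟨t, ht⟩
      rcases h with ⟨s, hs⟩
      omega
    · intro _
      have hAeven := (h1 (k + 1) i (by omega) hi (by omega)).1 (Odd.add_one hmo)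
      have e1 : i + (m + 1) - 1 + (k + 1) = i + (m + 1) + k := by omega
      rw [e1] at hAeven
      have hPm := (h0 (k + 2) i (by omega) hi (by omega)).2 hmo
      have e2 : i + m - 1 + (k + 2) = i + (m + 1) + k := by omega
      rw [e2] at hPm
      have he : ((-1 : ℤ) ^ (k + 2 - 1)) = (-1 : ℤ) ^ (k - 1) := by
        rw [show k + 2 - 1 = (k - 1) + 2 from by omega, pow_add]; norm_num
      rw [he] at hPm
      have hrec := hPeven (m + 1) i (by omega) (Odd.add_one hmo) hi (by omega)
      rw [Nat.add_sub_cancel, show m + 1 + 1 = m + 2 from rfl] at hrec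
      have hA1 : P (m + 1) i * x (i + (m + 1) + k)
          = 1 * (x (i + (m + 1) + k) * P (m + 1) i) := by
        rw [one_mul]; exact hAeven
      have hprod := comm_mul' (x (i + (m + 1) + k)) 1
        (((ν ^ 2 : Rˣ) ^ ((-1 : ℤ) ^ (k - 1)) : Rˣ) : R)
        (P (m + 1) i) (x (i + (m + 1))) (hucen k) hA1 hxa
      rw [one_mul] at hprod
      have hterm2 : ((ν⁻¹ : Rˣ) : R) * P m i * x (i + (m + 1) + k)
          = (((ν ^ 2 : Rˣ) ^ ((-1 : ℤ) ^ (k - 1)) : Rˣ) : R)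
            * (x (i + (m + 1) + k) * (((ν⁻¹ : Rˣ) : R) * P m i)) := by
        rw [mul_assoc, hPm, ← mul_assoc, hνinv, mul_assoc, ← mul_assoc ((ν⁻¹ : Rˣ) : R),
          hνinv (x (i + (m + 1) + k)), mul_assoc]
      rw [hrec, sub_mul, hprod, hterm2, ← mul_sub, ← mul_sub]

theorem commutation_with_distant_variables_even_case
    (R : Type*) [Ring R] (n : ℕ) (hn : 1 ≤ n)
    (ν : Rˣ) (hcen : ∀ r : R, (ν : R) * r = r * (ν : R))
    (x : ℕ → R)
    (hR1 : ∀ i, 1 ≤ i → i < n →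
      x i * x (i + 1) - 1 = ((ν : R) ^ 2) * (x (i + 1) * x i - 1))
    (hR2 : ∀ i k, 1 ≤ i → 1 < k → i + k ≤ n →
      x i * x (i + k) = (((ν ^ 2 : Rˣ) ^ ((-1 : ℤ) ^ (k - 1)) : Rˣ) : R) * (x (i + k) * x i))
    (P : ℕ → ℕ → R)
    (hP0 : ∀ i, P 0 i = 1)
    (hP1 : ∀ i, P 1 i = x i)
    (hPeven : ∀ m i, 1 ≤ m → Even m → 1 ≤ i → i + m ≤ n →
      P (m + 1) i = P m i * x (i + m) - ((ν⁻¹ : Rˣ) : R) * P (m - 1) i)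
    (hPodd : ∀ m i, 1 ≤ m → Odd m → 1 ≤ i → i + m ≤ n →
      P (m + 1) i = ((ν⁻¹ : Rˣ) : R) * (P m i * x (i + m) - P (m - 1) i)) :
    ∀ m k i, 2 ≤ m → Even m → 1 < k → 1 ≤ i → i + m - 1 + k ≤ n →
      P m i * x (i + m - 1 + k) = x (i + m - 1 + k) * P m i := by
  have key : ∀ m, Stmt R n ν x P m ∧ Stmt R n ν x P (m + 1) := by
    intro m
    induction m with
    | zero => exact ⟨stmt_zero n ν x P hP0, stmt_one n ν x P hR2 hP1⟩
    | succ m ih => exact ⟨ih.2, stmt_step n ν x P hcen hR2 hPeven hPodd m ih.1 ih.2⟩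
  intro m k i _ hEven hk hi hle
  exact ((key m).1 k i hk hi hle).1 hEven
end

section
/- Adjacent one-step mutated quantum cluster variables quasi-commute: for every 1 ≤ i < n, one has X'_i X'_{i+1} − 1 = q (X'_{i+1} X'_i − 1). -/
/-- The skew-symmetric matrix `Λ` (indexed by `1, …, n`) compatible with the incidence
matrix of the linearly oriented type `A` Dynkin quiver: `Λ i j = 1` if `i` is odd, `j` is
even and `i < j`; `Λ i j = -1` if `i` is even, `j` is odd and `i > j`; `Λ i j = 0`
otherwise. -/
def lamA (i j : ℕ) : ℤ :=
  if Odd i ∧ Even j ∧ i < j then 1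
  else if Even i ∧ Odd j ∧ j < i then -1
  else 0

lemma lamA_eval (i j : ℕ) : lamA i j =
    if i % 2 = 1 ∧ j % 2 = 0 ∧ i < j then 1
    else if i % 2 = 0 ∧ j % 2 = 1 ∧ j < i then -1
    else 0 := by
  simp [lamA, Nat.odd_iff, Nat.even_iff]

section QcHelpers

variable {G : Type*} [Group G]

lemma central_zpow {c : G} (hc : ∀ g : G, c * g = g * c) (k : ℤ) (g : G) :
    c ^ k * g = g * c ^ k :=
  ((show Commute c g from hc g).zpow_left k)

/-- `x` and `y` `q`-commute with exponent `k` (w.r.t. central `c`). -/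
def qc (c x y : G) (k : ℤ) : Prop := x * y = c ^ k * (y * x)

lemma qc_refl (c x : G) : qc c x x 0 := by simp [qc]

lemma qc_cast {c x y : G} {k k' : ℤ} (h : qc c x y k) (e : k = k') : qc c x y k' := e ▸ h

lemma qc_swap {c x y : G} {k : ℤ} (h : qc c x y k) : qc c y x (-k) := by
  unfold qc at *
  rw [h]; group

lemma qc_mul_right {c x y y' : G} {k k' : ℤ} (hc : ∀ g : G, c * g = g * c)
    (h : qc c x y k) (h' : qc c x y' k') : qc c x (y * y') (k + k') := by
  unfold qc at *
  calc x * (y * y') = (x * y) * y' := (mul_assoc _ _ _).symm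
    _ = (c ^ k * (y * x)) * y' := by rw [h]
    _ = c ^ k * (y * (x * y')) := by rw [mul_assoc, mul_assoc]
    _ = c ^ k * (y * (c ^ k' * (y' * x))) := by rw [h']
    _ = c ^ k * (c ^ k' * (y * (y' * x))) := by
        rw [← mul_assoc y, ← central_zpow hc k' y, mul_assoc]
    _ = c ^ (k + k') * (y * y' * x) := by rw [← mul_assoc, ← zpow_add, mul_assoc]

lemma qc_mul_left {c x x' y : G} {k k' : ℤ} (hc : ∀ g : G, c * g = g * c)
    (h : qc c x y k) (h' : qc c x' y k') : qc c (x * x') y (k + k') := by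
  have := qc_swap (qc_mul_right hc (qc_swap h) (qc_swap h'))
  exact qc_cast this (by ring)

lemma qc_inv_left {c x y : G} {k : ℤ} (hc : ∀ g : G, c * g = g * c)
    (h : qc c x y k) : qc c x⁻¹ y (-k) := by
  unfold qc at *
  have h1 : x * (y * x⁻¹) = c ^ k * y := by
    rw [← mul_assoc, h]; group
  calc x⁻¹ * y = x⁻¹ * (c ^ (-k) * (c ^ k * y)) := by group
    _ = c ^ (-k) * (x⁻¹ * (c ^ k * y)) := by
        rw [← mul_assoc, ← central_zpow hc (-k) x⁻¹, mul_assoc]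
    _ = c ^ (-k) * (x⁻¹ * (x * (y * x⁻¹))) := by rw [h1]
    _ = c ^ (-k) * (y * x⁻¹) := by group

lemma qc_inv_right {c x y : G} {k : ℤ} (hc : ∀ g : G, c * g = g * c)
    (h : qc c x y k) : qc c x y⁻¹ (-k) :=
  qc_cast (qc_swap (qc_inv_left hc (qc_swap h))) (by ring)

lemma dmul {d : G} (hd : ∀ g : G, d * g = g * d) (a b : ℤ) (x y : G) :
    (d ^ a * x) * (d ^ b * y) = d ^ (a + b) * (x * y) := by
  calc (d ^ a * x) * (d ^ b * y) = d ^ a * ((x * d ^ b) * y) := by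
        rw [mul_assoc, mul_assoc]
    _ = d ^ a * ((d ^ b * x) * y) := by rw [← central_zpow hd b x]
    _ = d ^ (a + b) * (x * y) := by rw [zpow_add]; group

lemma qc_scaled {c d x y : G} (hd : ∀ g : G, d * g = g * d)
    (hc : ∀ g : G, c * g = g * c) (a b : ℤ) (h : qc c x y 1) :
    (d ^ a * x) * (d ^ b * y) = c * ((d ^ b * y) * (d ^ a * x)) := by
  unfold qc at h
  rw [dmul hd, dmul hd, h, zpow_one, ← mul_assoc, ← hc (d ^ (a + b)), mul_assoc,
    add_comm b a]

end QcHelpers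

def Zf (n : ℕ) {R : Type*} [Ring R] (Y : ℕ → Rˣ) (j : ℕ) : Rˣ :=
  if 1 ≤ j ∧ j ≤ n then Y j else 1

set_option maxHeartbeats 1600000 in
theorem adjacent_mutated_variables_quasi_commute
    (n : ℕ) (hn : 2 ≤ n) (hneven : Even n)
    (R : Type*) [Ring R] (ν : Rˣ) (hcen : ∀ r : R, (ν : R) * r = r * (ν : R))
    (Y : ℕ → Rˣ)
    (hY : ∀ i j, 1 ≤ i → i ≤ n → 1 ≤ j → j ≤ n →
      (Y i : R) * (Y j : R) =
        (((ν ^ 2 : Rˣ) ^ (lamA i j) : Rˣ) : R) * ((Y j : R) * (Y i : R)))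
    (X' : ℕ → R)
    (hX1 : X' 1 = (((Y 1)⁻¹ : Rˣ) : R) + (ν : R) * (((Y 1)⁻¹ : Rˣ) : R) * (Y 2 : R))
    (hXn : X' n = ((ν⁻¹ : Rˣ) : R) * (((Y n)⁻¹ : Rˣ) : R) * (Y (n - 1) : R)
      + (((Y n)⁻¹ : Rˣ) : R))
    (hXmid : ∀ i, 1 < i → i < n →
      X' i = (((ν ^ (lamA i (i - 1)) : Rˣ)) : R) * (((Y i)⁻¹ : Rˣ) : R) * (Y (i - 1) : R)
        + (((ν ^ (lamA i (i + 1)) : Rˣ)) : R) * (((Y i)⁻¹ : Rˣ) : R) * (Y (i + 1) : R)) :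
    ∀ i, 1 ≤ i → i < n →
      X' i * X' (i + 1) - 1 = ((ν : R) ^ 2) * (X' (i + 1) * X' i - 1) := by
  have hn2 : n % 2 = 0 := Nat.even_iff.mp hneven
  set c : Rˣ := ν ^ 2 with hc_def
  have hcenU : ∀ g : Rˣ, ν * g = g * ν := fun g =>
    Units.ext (by simp only [Units.val_mul]; exact hcen g)
  have hcC : ∀ g : Rˣ, c * g = g * c := fun g => by
    rw [hc_def, pow_two, mul_assoc, hcenU g, ← mul_assoc, hcenU g, mul_assoc]
  have hZval : ∀ j, 1 ≤ j → j ≤ n → Zf n Y j = Y j := fun j h1 h2 => if_pos ⟨h1, h2⟩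
  have hZ0 : Zf n Y 0 = 1 := if_neg (by omega)
  have hZtop : Zf n Y (n + 1) = 1 := if_neg (by omega)
  -- commutation relations for `Zf`
  have hqcZ : ∀ s t, s ≤ n + 1 → t ≤ n + 1 → qc c (Zf n Y s) (Zf n Y t) (lamA s t) := by
    intro s t hs ht
    by_cases h1 : 1 ≤ s ∧ s ≤ n
    · by_cases h2 : 1 ≤ t ∧ t ≤ n
      · unfold qc
        refine Units.ext ?_
        rw [hZval s h1.1 h1.2, hZval t h2.1 h2.2, hc_def]
        simp only [Units.val_mul]
        exact hY s t h1.1 h1.2 h2.1 h2.2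
      · have hl : lamA s t = 0 := by rw [lamA_eval]; split_ifs <;> omega
        have hzt : Zf n Y t = 1 := if_neg h2
        unfold qc
        rw [hl, hzt, zpow_zero, one_mul, mul_one, one_mul]
    · have hl : lamA s t = 0 := by rw [lamA_eval]; split_ifs <;> omega
      have hzs : Zf n Y s = 1 := if_neg h1
      unfold qc
      rw [hl, hzs, zpow_zero, one_mul, mul_one, one_mul]
  -- the mutated variables as sums of two units
  have hAB : ∀ j, 1 ≤ j → j ≤ n → X' j =
      ((ν ^ (lamA j (j - 1)) * ((Zf n Y j)⁻¹ * Zf n Y (j - 1)) : Rˣ) : R) +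
      ((ν ^ (lamA j (j + 1)) * ((Zf n Y j)⁻¹ * Zf n Y (j + 1)) : Rˣ) : R) := by
    intro j hj1 hjn
    by_cases hj : j = 1
    · subst hj
      have l10 : lamA 1 0 = 0 := by decide
      have l12 : lamA 1 2 = 1 := by decide
      rw [hX1, l10, l12, hZval 1 le_rfl (by omega), hZval 2 (by omega) hn]
      simp only [Nat.sub_self, hZ0, zpow_zero, one_mul, mul_one, zpow_one, Units.val_mul]
      rw [mul_assoc]
    · by_cases hj' : j = n
      · rw [hj']
        have l1 : lamA n (n - 1) = -1 := by rw [lamA_eval]; split_ifs <;> omega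
        have l2 : lamA n (n + 1) = 0 := by rw [lamA_eval]; split_ifs <;> omega
        rw [hXn, l1, l2, hZval n (by omega) le_rfl, hZval (n - 1) (by omega) (by omega),
          hZtop]
        simp only [zpow_zero, one_mul, mul_one, Units.val_mul, zpow_neg, zpow_one]
        rw [mul_assoc]
      · rw [hXmid j (by omega) (by omega), hZval j hj1 hjn,
          hZval (j - 1) (by omega) (by omega), hZval (j + 1) (by omega) (by omega)]
        simp only [Units.val_mul]
        rw [mul_assoc, mul_assoc]
  -- main computation
  intro i hi1 hi
  set u : Rˣ := Zf n Y i with hu_def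
  set v : Rˣ := Zf n Y (i + 1) with hv_def
  set w : Rˣ := Zf n Y (i - 1) with hw_def
  set z : Rˣ := Zf n Y (i + 2) with hz_def
  have huv : qc c u v (lamA i (i + 1)) := hqcZ i (i + 1) (by omega) (by omega)
  have hwu : qc c w u (lamA (i - 1) i) := hqcZ (i - 1) i (by omega) (by omega)
  have hwv : qc c w v (lamA (i - 1) (i + 1)) := hqcZ (i - 1) (i + 1) (by omega) (by omega)
  have hzu : qc c z u (lamA (i + 2) i) := hqcZ (i + 2) i (by omega) (by omega)
  have hzv : qc c z v (lamA (i + 2) (i + 1)) := hqcZ (i + 2) (i + 1) (by omega) (by omega)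
  have hzw : qc c z w (lamA (i + 2) (i - 1)) := hqcZ (i + 2) (i - 1) (by omega) (by omega)
  -- the three quasi-commutation facts with exponent 1
  have hx1 := qc_mul_right hcC (qc_inv_right hcC (qc_inv_left hcC huv))
      (qc_inv_left hcC (qc_refl c u))
  have M1 : qc c (u⁻¹ * w) (v⁻¹ * u) 1 := by
    refine qc_cast (qc_mul_left hcC hx1
      (qc_mul_right hcC (qc_inv_right hcC hwv) hwu)) ?_
    simp only [lamA_eval]; split_ifs <;> omega
  have M2 : qc c (u⁻¹ * w) (v⁻¹ * z) 1 := by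
    refine qc_cast (qc_mul_left hcC
      (qc_mul_right hcC (qc_inv_right hcC (qc_inv_left hcC huv))
        (qc_inv_left hcC (qc_swap hzu)))
      (qc_mul_right hcC (qc_inv_right hcC hwv) (qc_swap hzw))) ?_
    simp only [lamA_eval]; split_ifs <;> omega
  have M3 : qc c (u⁻¹ * v) (v⁻¹ * z) 1 := by
    refine qc_cast (qc_mul_left hcC
      (qc_mul_right hcC (qc_inv_right hcC (qc_inv_left hcC huv))
        (qc_inv_left hcC (qc_swap hzu)))
      (qc_mul_right hcC (qc_inv_right hcC (qc_refl c v)) (qc_swap hzv))) ?_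
    simp only [lamA_eval]; split_ifs <;> omega
  -- the four units
  set a1 : Rˣ := ν ^ (lamA i (i - 1)) * (u⁻¹ * w) with ha1
  set b1 : Rˣ := ν ^ (lamA i (i + 1)) * (u⁻¹ * v) with hb1
  set a2 : Rˣ := ν ^ (lamA (i + 1) i) * (v⁻¹ * u) with ha2
  set b2 : Rˣ := ν ^ (lamA (i + 1) (i + 2)) * (v⁻¹ * z) with hb2
  have hU1 : a1 * a2 = c * (a2 * a1) := qc_scaled hcenU hcC _ _ M1
  have hU2 : a1 * b2 = c * (b2 * a1) := qc_scaled hcenU hcC _ _ M2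
  have hU3 : b1 * b2 = c * (b2 * b1) := qc_scaled hcenU hcC _ _ M3
  have e0 : lamA i (i + 1) + lamA (i + 1) i = 0 := by
    simp only [lamA_eval]; split_ifs <;> omega
  have hvu1 : (u⁻¹ * v) * (v⁻¹ * u) = 1 := by group
  have hvu2 : (v⁻¹ * u) * (u⁻¹ * v) = 1 := by group
  have hU4 : b1 * a2 = 1 := by
    rw [hb1, ha2, dmul hcenU, hvu1, mul_one, e0, zpow_zero]
  have hU5 : a2 * b1 = 1 := by
    rw [hb1, ha2, dmul hcenU, hvu2, mul_one, add_comm, e0, zpow_zero]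
  -- pass to R
  have hXi : X' i = (a1 : R) + (b1 : R) := hAB i hi1 (le_of_lt hi)
  have hXi1 : X' (i + 1) = (a2 : R) + (b2 : R) := by
    have h := hAB (i + 1) (by omega) (by omega)
    rwa [Nat.add_sub_cancel] at h
  have hu1 : (a1 : R) * a2 = (c : R) * ((a2 : R) * a1) := by
    have := congrArg (Units.val) hU1; push_cast at this ⊢; exact this
  have hu2 : (a1 : R) * b2 = (c : R) * ((b2 : R) * a1) := by
    have := congrArg (Units.val) hU2; push_cast at this ⊢; exact this
  have hu3 : (b1 : R) * b2 = (c : R) * ((b2 : R) * b1) := by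
    have := congrArg (Units.val) hU3; push_cast at this ⊢; exact this
  have hu4 : (b1 : R) * a2 = 1 := by
    have := congrArg (Units.val) hU4; push_cast at this ⊢; exact this
  have hu5 : (a2 : R) * b1 = 1 := by
    have := congrArg (Units.val) hU5; push_cast at this ⊢; exact this
  have hQ : ((ν : R)) ^ 2 = (c : R) := by rw [hc_def]; push_cast; ring
  rw [hXi, hXi1, hQ]
  have L : ((a1 : R) + b1) * ((a2 : R) + b2) =
      (c : R) * ((a2 : R) * a1) + (c : R) * ((b2 : R) * a1) +
        (c : R) * ((b2 : R) * b1) + 1 := by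
    rw [add_mul, mul_add, mul_add, hu1, hu2, hu4, hu3]; abel
  have Rr : ((a2 : R) + b2) * ((a1 : R) + b1) =
      (a2 : R) * a1 + (b2 : R) * a1 + (b2 : R) * b1 + 1 := by
    rw [add_mul, mul_add, mul_add, hu5]; abel
  rw [L, Rr]
  noncomm_ring
end

section
/- A quantum frieze pattern with invertible values is entirely determined by its values on the initial column: if f and g are quantum frieze patterns such that every value f(i,j) with 1 ≤ i ≤ n and j ∈ ℤ is invertible in D, and f(i,0) = g(i,0) for all 1 ≤ i ≤ n, then f(i,j) = g(i,j) for all 0 ≤ i ≤ n+1 and all j ∈ ℤ. -/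
/-- A quantum frieze pattern (for the linearly oriented type `A_n` quiver) with invertible
values is entirely determined by its values on the initial column `{(i,0) : 1 ≤ i ≤ n}`. -/
theorem quantum_frieze_pattern_determined_by_initial_column
    (n : ℕ) (hn : 1 ≤ n)
    (D : Type*) [Ring D] (ν : Dˣ) (hcen : ∀ r : D, (ν : D) * r = r * (ν : D))
    (f g : ℕ → ℤ → D)
    (hf0 : ∀ j : ℤ, f 0 j = 1) (hfn : ∀ j : ℤ, f (n + 1) j = 1)
    (hfrel : ∀ (i : ℕ) (j : ℤ), 1 ≤ i → i ≤ n →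
      f i j * f i (j + 1) - (ν : D) * (f (i - 1) (j + 1) * f (i + 1) j) = 1)
    (hg0 : ∀ j : ℤ, g 0 j = 1) (hgn : ∀ j : ℤ, g (n + 1) j = 1)
    (hgrel : ∀ (i : ℕ) (j : ℤ), 1 ≤ i → i ≤ n →
      g i j * g i (j + 1) - (ν : D) * (g (i - 1) (j + 1) * g (i + 1) j) = 1)
    (hunit : ∀ (i : ℕ) (j : ℤ), 1 ≤ i → i ≤ n → IsUnit (f i j))
    (hinit : ∀ i : ℕ, 1 ≤ i → i ≤ n → f i 0 = g i 0) :
    ∀ (i : ℕ) (j : ℤ), i ≤ n + 1 → f i j = g i j := by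
  -- forward propagation
  have step_fwd : ∀ j : ℤ, (∀ i ≤ n + 1, f i j = g i j) →
      ∀ i ≤ n + 1, f i (j + 1) = g i (j + 1) := by
    intro j hcol i
    induction i with
    | zero => intro _; rw [hf0, hg0]
    | succ i ih =>
      intro hle
      rcases eq_or_lt_of_le hle with h | h
      · rw [h, hfn, hgn]
      · have hin : i + 1 ≤ n := Nat.lt_succ_iff.mp h
        have h1 := hfrel (i + 1) j (Nat.le_add_left 1 i) hin
        have h2 := hgrel (i + 1) j (Nat.le_add_left 1 i) hin
        simp only [Nat.add_sub_cancel] at h1 h2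
        have e1 : f (i + 1) j * f (i + 1) (j + 1)
            = 1 + (ν : D) * (f i (j + 1) * f (i + 2) j) := eq_add_of_sub_eq h1
        have e2 : g (i + 1) j * g (i + 1) (j + 1)
            = 1 + (ν : D) * (g i (j + 1) * g (i + 2) j) := eq_add_of_sub_eq h2
        have hii : f i (j + 1) = g i (j + 1) := ih (by omega)
        have hi2 : f (i + 2) j = g (i + 2) j := hcol (i + 2) (by omega)
        have hi1 : f (i + 1) j = g (i + 1) j := hcol (i + 1) (by omega)
        have e3 : f (i + 1) j * f (i + 1) (j + 1) = g (i + 1) j * g (i + 1) (j + 1) := by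
          rw [e1, e2, hii, hi2]
        have e4 : g (i + 1) j * f (i + 1) (j + 1) = g (i + 1) j * g (i + 1) (j + 1) :=
          hi1 ▸ e3
        have hu : IsUnit (g (i + 1) j) := hi1 ▸ hunit (i + 1) j (Nat.le_add_left 1 i) hin
        exact hu.mul_left_cancel e4
  -- backward propagation
  have step_bwd : ∀ j : ℤ, (∀ i ≤ n + 1, f i j = g i j) →
      ∀ i ≤ n + 1, f i (j - 1) = g i (j - 1) := by
    intro j hcol
    have key : ∀ k, k ≤ n + 1 → f (n + 1 - k) (j - 1) = g (n + 1 - k) (j - 1) := by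
      intro k
      induction k with
      | zero => intro _; simp only [Nat.sub_zero]; rw [hfn, hgn]
      | succ k ih =>
        intro hk
        set i := n + 1 - (k + 1) with hidef
        rcases Nat.eq_zero_or_pos i with h0 | h0
        · rw [h0, hf0, hg0]
        · have hi1 : 1 ≤ i := h0
          have hin : i ≤ n := by omega
          have hsucc : i + 1 = n + 1 - k := by omega
          have h1 := hfrel i (j - 1) hi1 hin
          have h2 := hgrel i (j - 1) hi1 hin
          have hj : j - 1 + 1 = j := by ring
          rw [hj] at h1 h2
          have e1 : f i (j - 1) * f i j
              = 1 + (ν : D) * (f (i - 1) j * f (i + 1) (j - 1)) := eq_add_of_sub_eq h1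
          have e2 : g i (j - 1) * g i j
              = 1 + (ν : D) * (g (i - 1) j * g (i + 1) (j - 1)) := eq_add_of_sub_eq h2
          have him : f (i - 1) j = g (i - 1) j := hcol (i - 1) (by omega)
          have hip : f (i + 1) (j - 1) = g (i + 1) (j - 1) := by
            rw [hsucc]; exact ih (by omega)
          have hij : f i j = g i j := hcol i (by omega)
          have e3 : f i (j - 1) * f i j = g i (j - 1) * g i j := by
            rw [e1, e2, him, hip]
          have e4 : f i (j - 1) * g i j = g i (j - 1) * g i j := hij ▸ e3
          have hu : IsUnit (g i j) := hij ▸ hunit i j hi1 hin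
          obtain ⟨u, hu⟩ := hu
          have := congrArg (· * (↑u⁻¹ : D)) e4
          simpa [← hu, mul_assoc] using this
    intro i hle
    have : f (n + 1 - (n + 1 - i)) (j - 1) = g (n + 1 - (n + 1 - i)) (j - 1) :=
      key (n + 1 - i) (by omega)
    rwa [Nat.sub_sub_self hle] at this
  have base : ∀ i ≤ n + 1, f i 0 = g i 0 := by
    intro i hle
    rcases Nat.eq_zero_or_pos i with h0 | h0
    · rw [h0, hf0, hg0]
    · rcases eq_or_lt_of_le hle with h | h
      · rw [h, hfn, hgn]
      · exact hinit i h0 (by omega)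
  have main : ∀ j : ℤ, ∀ i ≤ n + 1, f i j = g i j := by
    intro j
    induction j using Int.induction_on with
    | zero => exact base
    | succ k ihk => exact step_fwd k ihk
    | pred k ihk =>
      have := step_bwd (-(k : ℤ)) ihk
      simpa [sub_eq_add_neg, add_comm] using this
  exact fun i j hle => main j i hle
end

section
/- A φ-periodic quantum frieze pattern with invertible values is entirely determined by its values on the set {(1,j) : 0 ≤ j ≤ n}: if f and g are φ-periodic quantum frieze patterns such that every value f(i,j) with 1 ≤ i ≤ n and j ∈ ℤ is invertible in D, and f(1,j) = g(1,j) for all 0 ≤ j ≤ n, then f(i,j) = g(i,j) for all 0 ≤ i ≤ n+1 and all j ∈ ℤ. -/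
/-- A φ-periodic quantum frieze pattern (for the linearly oriented type `A_n` quiver) with
invertible values is entirely determined by its values on the set `{(1,j) : 0 ≤ j ≤ n}`. -/
theorem periodic_quantum_frieze_pattern_determined_by_mouth
    (n : ℕ) (hn : 1 ≤ n)
    (D : Type*) [Ring D] (ν : Dˣ) (hcen : ∀ r : D, (ν : D) * r = r * (ν : D))
    (f g : ℕ → ℤ → D)
    (hf0 : ∀ j : ℤ, f 0 j = 1) (hfn : ∀ j : ℤ, f (n + 1) j = 1)
    (hfrel : ∀ (i : ℕ) (j : ℤ), 1 ≤ i → i ≤ n →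
      f i j * f i (j + 1) - (ν : D) * (f (i - 1) (j + 1) * f (i + 1) j) = 1)
    (hfper : ∀ (i : ℕ) (j : ℤ), 1 ≤ i → i ≤ n →
      f i j = f (n - i + 1) (j + (i : ℤ) + 1))
    (hg0 : ∀ j : ℤ, g 0 j = 1) (hgn : ∀ j : ℤ, g (n + 1) j = 1)
    (hgrel : ∀ (i : ℕ) (j : ℤ), 1 ≤ i → i ≤ n →
      g i j * g i (j + 1) - (ν : D) * (g (i - 1) (j + 1) * g (i + 1) j) = 1)
    (hgper : ∀ (i : ℕ) (j : ℤ), 1 ≤ i → i ≤ n →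
      g i j = g (n - i + 1) (j + (i : ℤ) + 1))
    (hunit : ∀ (i : ℕ) (j : ℤ), 1 ≤ i → i ≤ n → IsUnit (f i j))
    (hinit : ∀ j : ℤ, 0 ≤ j → j ≤ n → f 1 j = g 1 j) :
    ∀ (i : ℕ) (j : ℤ), i ≤ n + 1 → f i j = g i j := by
  -- cancel ν on the left
  have hν : ∀ a b : D, (ν : D) * a = (ν : D) * b → a = b := by
    intro a b h
    have := congrArg (fun x => (↑ν⁻¹ : D) * x) h
    simpa [← mul_assoc] using this
  -- Step A: equality on the fundamental triangle
  have tri : ∀ i : ℕ, ∀ j : ℤ, 0 ≤ j → (i : ℤ) + j ≤ (n : ℤ) + 1 → f i j = g i j := by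
    intro i
    induction i using Nat.strong_induction_on with
    | _ i IH =>
      rcases i with _ | _ | k
      · intro j _ _; rw [hf0, hg0]
      · intro j hj hjn
        exact hinit j hj (by push_cast at hjn; omega)
      · intro j hj hjn
        push_cast at hjn
        have hk1 : 1 ≤ k + 1 := by omega
        have hkn : k + 1 ≤ n := by omega
        have e1 : f (k+1) j = g (k+1) j := IH (k+1) (by omega) j hj (by push_cast; omega)
        have e2 : f (k+1) (j+1) = g (k+1) (j+1) :=
          IH (k+1) (by omega) (j+1) (by omega) (by push_cast; omega)
        have e3 : f k (j+1) = g k (j+1) :=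
          IH k (by omega) (j+1) (by omega) (by push_cast; omega)
        have hfr := hfrel (k+1) j hk1 hkn
        have hgr := hgrel (k+1) j hk1 hkn
        simp only [Nat.add_sub_cancel] at hfr hgr
        have key : (ν : D) * (f k (j+1) * f (k+2) j) = (ν : D) * (g k (j+1) * g (k+2) j) := by
          have hA : f (k+1) j * f (k+1) (j+1) = g (k+1) j * g (k+1) (j+1) := by rw [e1, e2]
          have h1 := sub_eq_iff_eq_add.mp hfr
          have h2 := sub_eq_iff_eq_add.mp hgr
          rw [hA] at h1
          exact add_left_cancel (h1.symm.trans h2)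
        have hu : IsUnit (f k (j+1)) := by
          rcases Nat.eq_zero_or_pos k with hk | hk
          · subst hk; rw [hf0]; exact isUnit_one
          · exact hunit k (j+1) hk (by omega)
        have prodEq := hν _ _ key
        rw [← e3] at prodEq
        exact hu.mul_left_cancel prodEq
  -- periodicity of row 1
  have perf : ∀ j : ℤ, f 1 j = f 1 (j + ((n : ℤ) + 3)) := by
    intro j
    have h1 : f 1 j = f n (j + 2) := by
      have := hfper 1 j le_rfl hn
      rwa [Nat.sub_add_cancel hn, show j + ((1:ℕ) : ℤ) + 1 = j + 2 by push_cast; ring] at this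
    have h2 : f n (j + 2) = f 1 (j + ((n : ℤ) + 3)) := by
      have := hfper n (j + 2) hn le_rfl
      rwa [Nat.sub_self, zero_add, show j + 2 + (n : ℤ) + 1 = j + ((n : ℤ) + 3) by ring] at this
    rw [h1, h2]
  have perfk : ∀ (k : ℤ) (j : ℤ), f 1 (j + k * ((n : ℤ) + 3)) = f 1 j := by
    intro k
    induction k using Int.induction_on with
    | zero => intro j; simp
    | succ k ih =>
      intro j
      rw [show j + ((k : ℤ) + 1) * ((n : ℤ) + 3) = (j + (n : ℤ) + 3) + k * ((n : ℤ) + 3) by ring,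
        ih]
      rw [show j + (n : ℤ) + 3 = j + ((n : ℤ) + 3) by ring]
      exact (perf j).symm
    | pred k ih =>
      intro j
      rw [show j + (-(k : ℤ) - 1) * ((n : ℤ) + 3) = (j - (n : ℤ) - 3) + (-(k:ℤ)) * ((n : ℤ) + 3) by ring,
        ih]
      have := perf (j - (n : ℤ) - 3)
      rw [show j - (n : ℤ) - 3 + ((n : ℤ) + 3) = j by ring] at this
      exact this
  -- row 1 on the window [0, n+2]
  have base : ∀ r : ℤ, 0 ≤ r → r ≤ (n : ℤ) + 2 → f 1 r = g 1 r := by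
    intro r h0 h2
    rcases le_or_gt r (n : ℤ) with h | h
    · exact hinit r h0 h
    · have e := tri n (r - n - 1) (by omega) (by omega)
      have hf1 : f 1 r = f n (r - n - 1) := by
        have := hfper n (r - n - 1) hn le_rfl
        rw [Nat.sub_self, zero_add, show r - (n : ℤ) - 1 + n + 1 = r by ring] at this
        exact this.symm
      have hg1 : g 1 r = g n (r - n - 1) := by
        have := hgper n (r - n - 1) hn le_rfl
        rw [Nat.sub_self, zero_add, show r - (n : ℤ) - 1 + n + 1 = r by ring] at this
        exact this.symm
      rw [hf1, e, ← hg1]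
  -- row 1 everywhere
  have row1 : ∀ j : ℤ, f 1 j = g 1 j := by
    intro j
    set m : ℤ := (n : ℤ) + 3 with hm
    have hmpos : 0 < m := by omega
    have hr0 : 0 ≤ j % m := Int.emod_nonneg j (by omega)
    have hr1 : j % m < m := Int.emod_lt_of_pos j hmpos
    have hper := perfk (j / m) (j % m)
    have hj : j % m + j / m * m = j := Int.emod_add_ediv_mul j m
    rw [hj] at hper
    -- same for g
    have pergk : f 1 j = f 1 (j % m) := hper
    -- g periodicity
    have perg : ∀ j' : ℤ, g 1 j' = g 1 (j' + m) := by
      intro j'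
      have h1 : g 1 j' = g n (j' + 2) := by
        have := hgper 1 j' le_rfl hn
        rwa [Nat.sub_add_cancel hn, show j' + ((1:ℕ) : ℤ) + 1 = j' + 2 by push_cast; ring] at this
      have h2 : g n (j' + 2) = g 1 (j' + m) := by
        have := hgper n (j' + 2) hn le_rfl
        rwa [Nat.sub_self, zero_add, show j' + 2 + (n : ℤ) + 1 = j' + m by rw [hm]; ring] at this
      rw [h1, h2]
    have pergk2 : ∀ (k : ℤ) (j' : ℤ), g 1 (j' + k * m) = g 1 j' := by
      intro k
      induction k using Int.induction_on with
      | zero => intro j'; simp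
      | succ k ih =>
        intro j'
        rw [show j' + ((k : ℤ) + 1) * m = (j' + m) + k * m by ring, ih]
        exact (perg j').symm
      | pred k ih =>
        intro j'
        rw [show j' + (-(k : ℤ) - 1) * m = (j' - m) + (-(k:ℤ)) * m by ring, ih]
        have := perg (j' - m)
        rw [show j' - m + m = j' by ring] at this
        exact this
    have hpg := pergk2 (j / m) (j % m)
    rw [hj] at hpg
    rw [pergk, hpg]
    exact base (j % m) hr0 (by omega)
  -- Step C: propagate everywhere
  intro i
  induction i using Nat.strong_induction_on with
  | _ i IH =>
    rcases i with _ | _ | k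
    · intro j _; rw [hf0, hg0]
    · intro j _; exact row1 j
    · intro j hle
      have hk1 : 1 ≤ k + 1 := by omega
      have hkn : k + 1 ≤ n := by omega
      have e1 : f (k+1) j = g (k+1) j := IH (k+1) (by omega) j (by omega)
      have e2 : f (k+1) (j+1) = g (k+1) (j+1) := IH (k+1) (by omega) (j+1) (by omega)
      have e3 : f k (j+1) = g k (j+1) := IH k (by omega) (j+1) (by omega)
      have hfr := hfrel (k+1) j hk1 hkn
      have hgr := hgrel (k+1) j hk1 hkn
      simp only [Nat.add_sub_cancel] at hfr hgr
      have key : (ν : D) * (f k (j+1) * f (k+2) j) = (ν : D) * (g k (j+1) * g (k+2) j) := by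
        have hA : f (k+1) j * f (k+1) (j+1) = g (k+1) j * g (k+1) (j+1) := by rw [e1, e2]
        have h1 := sub_eq_iff_eq_add.mp hfr
        have h2 := sub_eq_iff_eq_add.mp hgr
        rw [hA] at h1
        exact add_left_cancel (h1.symm.trans h2)
      have hu : IsUnit (f k (j+1)) := by
        rcases Nat.eq_zero_or_pos k with hk | hk
        · subst hk; rw [hf0]; exact isUnit_one
        · exact hunit k (j+1) hk (by omega)
      have prodEq := hν _ _ key
      rw [← e3] at prodEq
      exact hu.mul_left_cancel prodEq
end

section
/- Quantum pentagon periodicity (the quantum frieze of variables in type A_2): define x_k ∈ D for all k ∈ ℤ by 5-periodicity x_{k+5} = x_k together with x_1 = Y_1, x_2 = Y_2, x_3 = Y_1^{−1}(1 + ν Y_2), x_4 = Y_2^{−1} Y_1^{−1}(Y_1 + ν + q Y_2), x_5 = (1 + ν Y_1) Y_2^{−1}. Then x_k x_{k+2} = 1 + ν x_{k+1} for every k ∈ ℤ. In particular, the quantum frieze of variables associated with a linearly oriented Dynkin quiver of type A with two vertices is 5-periodic along its zigzag, with the five entries listed above. -/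
/-- **Quantum pentagon periodicity**: the quantum frieze of variables associated with a
linearly oriented Dynkin quiver of type `A` with two vertices is `5`-periodic along its
zigzag, with the five entries `Y₁`, `Y₂`, `Y₁⁻¹(1 + ν Y₂)`, `Y₂⁻¹Y₁⁻¹(Y₁ + ν + q Y₂)`,
`(1 + ν Y₁)Y₂⁻¹`, and each consecutive triple satisfies the quantum frieze relation
`x k * x (k+2) = 1 + ν * x (k+1)`. -/
theorem quantum_pentagon_periodicity
    (D : Type*) [Ring D] (ν : Dˣ) (hcen : ∀ r : D, (ν : D) * r = r * (ν : D))
    (Y₁ Y₂ : Dˣ)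
    (hY : (Y₁ : D) * (Y₂ : D) = ((ν : D) ^ 2) * ((Y₂ : D) * (Y₁ : D)))
    (x : ℤ → D)
    (hper : ∀ k : ℤ, x (k + 5) = x k)
    (h1 : x 1 = (Y₁ : D))
    (h2 : x 2 = (Y₂ : D))
    (h3 : x 3 = ((Y₁⁻¹ : Dˣ) : D) * (1 + (ν : D) * (Y₂ : D)))
    (h4 : x 4 = ((Y₂⁻¹ : Dˣ) : D) * ((Y₁⁻¹ : Dˣ) : D) *
      ((Y₁ : D) + (ν : D) + ((ν : D) ^ 2) * (Y₂ : D)))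
    (h5 : x 5 = (1 + (ν : D) * (Y₁ : D)) * ((Y₂⁻¹ : Dˣ) : D)) :
    ∀ k : ℤ, x k * x (k + 2) = 1 + (ν : D) * x (k + 1) := by
  -- abbreviations
  set v : D := (ν : D) with hv
  set w : D := ((ν⁻¹ : Dˣ) : D) with hw
  set a : D := (Y₁ : D) with hA
  set b : D := (Y₂ : D) with hB
  set a' : D := ((Y₁⁻¹ : Dˣ) : D) with hA'
  set b' : D := ((Y₂⁻¹ : Dˣ) : D) with hB'
  have hvw : v * w = 1 := ν.mul_inv
  have hwv : w * v = 1 := ν.inv_mul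
  have haa' : a * a' = 1 := Y₁.mul_inv
  have ha'a : a' * a = 1 := Y₁.inv_mul
  have hbb' : b * b' = 1 := Y₂.mul_inv
  have hb'b : b' * b = 1 := Y₂.inv_mul
  have hcw : ∀ r : D, w * r = r * w := by
    intro r
    have h1 : w * r = w * (r * (v * w)) := by rw [hvw, mul_one]
    rw [h1, ← mul_assoc r v, ← hcen r, ← mul_assoc, ← mul_assoc, hwv, one_mul]
  -- moving central elements to the front
  have mva : ∀ s : D, a * (v * s) = v * (a * s) := fun s => by
    rw [← mul_assoc, ← hcen, mul_assoc]
  have mvb : ∀ s : D, b * (v * s) = v * (b * s) := fun s => by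
    rw [← mul_assoc, ← hcen, mul_assoc]
  have mva' : ∀ s : D, a' * (v * s) = v * (a' * s) := fun s => by
    rw [← mul_assoc, ← hcen, mul_assoc]
  have mvb' : ∀ s : D, b' * (v * s) = v * (b' * s) := fun s => by
    rw [← mul_assoc, ← hcen, mul_assoc]
  have mwa : ∀ s : D, a * (w * s) = w * (a * s) := fun s => by
    rw [← mul_assoc, ← hcw, mul_assoc]
  have mwb : ∀ s : D, b * (w * s) = w * (b * s) := fun s => by
    rw [← mul_assoc, ← hcw, mul_assoc]
  have mwa' : ∀ s : D, a' * (w * s) = w * (a' * s) := fun s => by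
    rw [← mul_assoc, ← hcw, mul_assoc]
  have mwb' : ∀ s : D, b' * (w * s) = w * (b' * s) := fun s => by
    rw [← mul_assoc, ← hcw, mul_assoc]
  have tva : a * v = v * a := (hcen a).symm
  have tvb : b * v = v * b := (hcen b).symm
  have tva' : a' * v = v * a' := (hcen a').symm
  have tvb' : b' * v = v * b' := (hcen b').symm
  have twa : a * w = w * a := (hcw a).symm
  have twb : b * w = w * b := (hcw b).symm
  have twa' : a' * w = w * a' := (hcw a').symm
  have twb' : b' * w = w * b' := (hcw b').symm
  -- cancellation with tails
  have caa' : ∀ s : D, a * (a' * s) = s := fun s => by rw [← mul_assoc, haa', one_mul]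
  have ca'a : ∀ s : D, a' * (a * s) = s := fun s => by rw [← mul_assoc, ha'a, one_mul]
  have cbb' : ∀ s : D, b * (b' * s) = s := fun s => by rw [← mul_assoc, hbb', one_mul]
  have cb'b : ∀ s : D, b' * (b * s) = s := fun s => by rw [← mul_assoc, hb'b, one_mul]
  have cvw : ∀ s : D, v * (w * s) = s := fun s => by rw [← mul_assoc, hvw, one_mul]
  have cwv : ∀ s : D, w * (v * s) = s := fun s => by rw [← mul_assoc, hwv, one_mul]
  -- the commutation relation and its consequences, in normal form
  have core1 : a * b = v * (v * (b * a)) := by rw [hY, pow_two, mul_assoc]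
  have core2 : b * a = w * (w * (a * b)) := by rw [core1, cwv, cwv]
  have core3 : b * a' = v * (v * (a' * b)) := by
    have h1 : a' * (a * (b * a')) = b * a' := by rw [← mul_assoc, ha'a, one_mul]
    rw [← h1, ← mul_assoc a b a', core1]
    simp only [mul_assoc, haa', mul_one, mva', mvb]
  have core3' : a' * b = w * (w * (b * a')) := by rw [core3, cwv, cwv]
  have core4 : b' * a = v * (v * (a * b')) := by
    have h1 : b' * (a * (b * b')) = b' * a := by rw [hbb', mul_one]
    rw [← h1, ← mul_assoc a b b', core1]
    simp only [mul_assoc, mvb', cb'b]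
  have core5 : b' * a' = w * (w * (a' * b')) := by
    have h1 : b' * (a' * (b * b')) = b' * a' := by rw [hbb', mul_one]
    rw [← h1, ← mul_assoc a' b b', core3']
    simp only [mul_assoc, mwb', cb'b]
  -- tail versions
  have gab : ∀ s : D, a * (b * s) = v * (v * (b * (a * s))) := fun s => by
    rw [← mul_assoc, core1]; simp only [mul_assoc]
  have gba : ∀ s : D, b * (a * s) = w * (w * (a * (b * s))) := fun s => by
    rw [← mul_assoc, core2]; simp only [mul_assoc]
  have gba' : ∀ s : D, b * (a' * s) = v * (v * (a' * (b * s))) := fun s => by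
    rw [← mul_assoc, core3]; simp only [mul_assoc]
  have gb'a : ∀ s : D, b' * (a * s) = v * (v * (a * (b' * s))) := fun s => by
    rw [← mul_assoc, core4]; simp only [mul_assoc]
  have gb'a' : ∀ s : D, b' * (a' * s) = w * (w * (a' * (b' * s))) := fun s => by
    rw [← mul_assoc, core5]; simp only [mul_assoc]
  -- extended periodicity
  have hper' : ∀ n : ℤ, ∀ k : ℤ, x (k + 5 * n) = x k := by
    intro n
    induction n using Int.induction_on with
    | zero => intro k; norm_num
    | succ m ih => intro k
                   have : k + 5 * (m + 1) = (k + 5 * m) + 5 := by ring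
                   rw [this, hper, ih]
    | pred m ih => intro k
                   have h := hper (k + 5 * (-(m : ℤ) - 1))
                   rw [show k + 5 * (-(m : ℤ) - 1) + 5 = k + 5 * (-(m : ℤ)) from by ring] at h
                   exact h.symm.trans (ih k)
  -- the five base cases
  have P : ∀ r : ℤ, 0 ≤ r → r < 5 → x r * x (r + 2) = 1 + v * x (r + 1) := by
    intro r hr0 hr5
    interval_cases r
    · -- r = 0 : x 0 = x 5, x 2, x 1... x 0 * x 2 = 1 + v * x 1
      have e0 : x 0 = x 5 := by have := hper 0; simpa using this.symm
      rw [show (0:ℤ)+2 = 2 by norm_num, show (0:ℤ)+1 = 1 by norm_num, e0, h5, h2, h1]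
      rw [mul_assoc, hb'b, mul_one]
    · rw [show (1:ℤ)+2 = 3 by norm_num, show (1:ℤ)+1 = 2 by norm_num, h1, h3, h2]
      rw [← mul_assoc, haa', one_mul]
    · rw [show (2:ℤ)+2 = 4 by norm_num, show (2:ℤ)+1 = 3 by norm_num, h2, h4, h3]
      simp only [pow_two, mul_add, add_mul, mul_one, one_mul, mul_assoc,
        mva, mvb, mva', mvb', mwa, mwb, mwa', mwb', tva, tvb, tva', tvb',
        twa, twb, twa', twb',
        caa', ca'a, cbb', cb'b, cvw, cwv, haa', ha'a, hbb', hb'b, hvw, hwv,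
        gba, gba', gb'a, gb'a', core2, core3, core4, core5]
      abel
    · rw [show (3:ℤ)+2 = 5 by norm_num, show (3:ℤ)+1 = 4 by norm_num, h3, h5, h4]
      simp only [pow_two, mul_add, add_mul, mul_one, one_mul, mul_assoc,
        mva, mvb, mva', mvb', mwa, mwb, mwa', mwb', tva, tvb, tva', tvb',
        twa, twb, twa', twb',
        caa', ca'a, cbb', cb'b, cvw, cwv, haa', ha'a, hbb', hb'b, hvw, hwv,
        gba, gba', gb'a, gb'a', core2, core3, core4, core5]
      abel
    · have e6 : x 6 = x 1 := hper 1
      rw [show (4:ℤ)+2 = 6 by norm_num, show (4:ℤ)+1 = 5 by norm_num, e6, h4, h5, h1]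
      simp only [pow_two, mul_add, add_mul, mul_one, one_mul, mul_assoc,
        mva, mvb, mva', mvb', mwa, mwb, mwa', mwb', tva, tvb, tva', tvb',
        twa, twb, twa', twb',
        caa', ca'a, cbb', cb'b, cvw, cwv, haa', ha'a, hbb', hb'b, hvw, hwv,
        gba, gba', gb'a, gb'a', core2, core3, core4, core5]
      abel
  -- conclude by reduction modulo 5
  intro k
  have hk : k = k % 5 + 5 * (k / 5) := by omega
  have h0 : (0:ℤ) ≤ k % 5 := Int.emod_nonneg k (by norm_num)
  have h5' : k % 5 < 5 := Int.emod_lt_of_pos k (by norm_num)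
  have e1 : x k = x (k % 5) := by
    conv_lhs => rw [hk]
    exact hper' _ _
  have e2 : x (k + 2) = x (k % 5 + 2) := by
    have : k + 2 = (k % 5 + 2) + 5 * (k / 5) := by omega
    rw [this, hper']
  have e3 : x (k + 1) = x (k % 5 + 1) := by
    have : k + 1 = (k % 5 + 1) + 5 * (k / 5) := by omega
    rw [this, hper']
  rw [e1, e2, e3]
  exact P (k % 5) h0 h5'
end

section
/- Mutating the incidence matrix of the linearly oriented type A_n quiver successively at the vertices 1, 2, …, n returns the original matrix: B^{n+1} = B, i.e., (μ_n ∘ μ_{n−1} ∘ ⋯ ∘ μ_1)(B) = B. -/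
/-- The incidence matrix of the linearly oriented type `A_n` quiver (0-indexed):
`b i j = 1` if `j = i + 1`, `b i j = -1` if `j = i - 1`, and `b i j = 0` otherwise. -/
def incidenceA (n : ℕ) : Matrix (Fin n) (Fin n) ℤ := fun i j =>
  if (j : ℕ) = (i : ℕ) + 1 then 1 else if (i : ℕ) = (j : ℕ) + 1 then -1 else 0

/-- Matrix mutation in the direction `k`:
`μ_k(C) i j = -C i j` if `i = k` or `j = k`, and
`μ_k(C) i j = C i j + (|C i k| * C k j + C i k * |C k j|) / 2` otherwise. -/
def matMutation (n : ℕ) (k : Fin n) (C : Matrix (Fin n) (Fin n) ℤ) :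
    Matrix (Fin n) (Fin n) ℤ := fun i j =>
  if i = k ∨ j = k then -C i j
  else C i j + (|C i k| * C k j + C i k * |C k j|) / 2

/-- The sequence of mutated matrices: `Bseq n 0 = B` is the incidence matrix of the
linearly oriented type `A_n` quiver (so `Bseq n k` is `B^{k+1}` in 1-indexed notation),
and `Bseq n (k+1) = μ_k (Bseq n k)` (mutations performed at the vertices `0, 1, …, n-1`
successively, i.e. `1, 2, …, n` in 1-indexed notation). -/
def Bseq (n : ℕ) : ℕ → Matrix (Fin n) (Fin n) ℤ
  | 0 => incidenceA n
  | k + 1 => if h : k < n then matMutation n ⟨k, h⟩ (Bseq n k) else Bseq n k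

/-- Closed form: the incidence matrix with the edge between `m-1` and `m` flipped. -/
def Bform (n m : ℕ) : Matrix (Fin n) (Fin n) ℤ := fun i j =>
  if (i : ℕ) + 1 = m ∧ (j : ℕ) = m then -1
  else if (j : ℕ) + 1 = m ∧ (i : ℕ) = m then 1
  else incidenceA n i j

set_option maxHeartbeats 2000000 in
lemma bform_step (n m : ℕ) (h : m < n) :
    matMutation n ⟨m, h⟩ (Bform n m) = Bform n (m + 1) := by
  funext i j
  have hi := i.isLt
  have hj := j.isLt
  simp only [matMutation, Bform, incidenceA, Fin.ext_iff]
  split_ifs <;>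
      first
        | omega
        | (simp only [and_true, true_and] at *; omega)
        | norm_num

lemma bseq_eq_bform (n : ℕ) : ∀ k, k ≤ n → Bseq n k = Bform n k := by
  intro k
  induction k with
  | zero =>
    intro _
    funext i j
    simp only [Bseq, Bform]
    rw [if_neg (by omega), if_neg (by omega)]
  | succ k ih =>
    intro hk
    have hkn : k < n := hk
    simp only [Bseq, dif_pos hkn, ih (le_of_lt hkn), bform_step]

/-- Mutating the incidence matrix of the linearly oriented type `A_n` quiver successively
at the vertices `1, 2, …, n` returns the original matrix: `B^{n+1} = B`. -/
theorem mutation_sequence_returns_initial_matrix (n : ℕ) (hn : 2 ≤ n) :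
    Bseq n n = incidenceA n := by
  rw [bseq_eq_bform n n le_rfl]
  funext i j
  have hj := j.isLt
  simp only [Bform]
  split_ifs <;> omega
end
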